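/- arXiv:2205.08063 — 7 statements merged into one kernel-verified Lean document; each statement's English description precedes it below -/
import Mathlib

section
/- Let n ≥ 1, τ > 0, and let A, B, H(λ,K) be as in the context. For every row vector K = [K_1,…,K_n] ∈ ℝ^{1×n}, every λ ∈ ℝ, and every complex number z, the characteristic polynomial of H(λ,K) satisfies det(zI_n − H(λ,K)) = (z − 1)^n + λ · Σ_{p=1}^{n} τ^p K_{n−p+1} (z − 1)^{n−p}. -/
open Matrix

/-- The n×n system matrix `A`: ones on the diagonal, `τ` on the superdiagonal. -/
noncomputable def Amat (n : ℕ) (τ : ℝ) : Matrix (Fin n) (Fin n) ℝ :=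
  Matrix.of fun i j => if (j : ℕ) = (i : ℕ) then 1 else if (j : ℕ) = (i : ℕ) + 1 then τ else 0

/-- The n×1 input matrix `B`: last entry `τ`, all other entries `0`. -/
noncomputable def Bmat (n : ℕ) (τ : ℝ) : Matrix (Fin n) (Fin 1) ℝ :=
  Matrix.of fun i _ => if (i : ℕ) = n - 1 then τ else 0

/-- `H(λ, K) = A - λ B K`. -/
noncomputable def Hmat (n : ℕ) (τ : ℝ) (lam : ℝ) (K : Matrix (Fin 1) (Fin n) ℝ) :
    Matrix (Fin n) (Fin n) ℝ :=
  Amat n τ - lam • (Bmat n τ * K)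

noncomputable def Mgen (z t : ℂ) : ∀ (n : ℕ), (Fin n → ℂ) → Matrix (Fin n) (Fin n) ℂ :=
  fun n c => Matrix.of fun i j =>
    (if (j : ℕ) = (i : ℕ) then z - 1 else 0) +
    (if (j : ℕ) = (i : ℕ) + 1 then -t else 0) +
    (if (i : ℕ) = n - 1 then c j else 0)

lemma aux (z t : ℂ) : ∀ (n : ℕ) (c : Fin n → ℂ),
    (Mgen z t n c).det = (z - 1) ^ n +
      ∑ j : Fin n, c j * t ^ (n - 1 - (j : ℕ)) * (z - 1) ^ (j : ℕ) := by
  intro n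
  induction n with
  | zero => intro c; simp [Mgen]
  | succ m ih =>
    intro c
    match m, ih with
    | 0, _ =>
      simp [Mgen, Matrix.det_fin_one, Fin.sum_univ_succ]
    | m + 1, ih =>
      rw [Matrix.det_succ_column_zero]
      rw [Fin.sum_univ_succ]
      have h0 : (Mgen z t (m+2) c) 0 0 = z - 1 := by
        simp [Mgen]
      have hsub0 : (Mgen z t (m+2) c).submatrix (Fin.succAbove 0) Fin.succ
          = Mgen z t (m+1) (fun j => c j.succ) := by
        ext i j
        simp only [Mgen, Matrix.submatrix_apply, Matrix.of_apply, Fin.succAbove_zero,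
          Fin.val_succ]
        have e1 : ((j:ℕ)+1 = (i:ℕ)+1) ↔ ((j:ℕ) = (i:ℕ)) := by omega
        have e2 : ((j:ℕ)+1 = (i:ℕ)+1+1) ↔ ((j:ℕ) = (i:ℕ)+1) := by omega
        have e3 : ((i:ℕ)+1 = m+2-1) ↔ ((i:ℕ) = m+1-1) := by omega
        rw [if_congr e1 rfl rfl, if_congr e2 rfl rfl, if_congr e3 rfl rfl]
      have hlastcol : ∀ i : Fin (m+1), (Mgen z t (m+2) c) i.succ 0
          = if (i:ℕ) = m then c 0 else 0 := by
        intro i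
        simp only [Mgen, Matrix.of_apply, Fin.val_succ, Fin.val_zero]
        have : ¬ ((0:ℕ) = (i:ℕ)+1) := by omega
        have h2 : ¬ ((0:ℕ) = (i:ℕ)+1+1) := by omega
        have h3 : ((i:ℕ)+1 = m+2-1) ↔ ((i:ℕ) = m) := by omega
        simp only [this, h2, h3, if_false]
        ring
      have hsum : ∑ i : Fin (m+1), (-1:ℂ)^((i.succ:Fin (m+2)):ℕ) *
            (Mgen z t (m+2) c) i.succ 0 *
            ((Mgen z t (m+2) c).submatrix (Fin.succAbove i.succ) Fin.succ).det
          = (-1:ℂ)^(m+1) * c 0 * (-t)^(m+1) := by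
        rw [Finset.sum_eq_single (Fin.last m)]
        · have hlt : (Mgen z t (m+2) c).submatrix (Fin.succAbove (Fin.last m).succ) Fin.succ
              = Matrix.of fun a b : Fin (m+1) =>
                  (if (b:ℕ)+1 = (a:ℕ) then z - 1 else 0) +
                  (if (b:ℕ) = (a:ℕ) then -t else 0) := by
            ext a b
            have hsa : (Fin.last m).succ = Fin.last (m+1) := rfl
            simp only [hsa, Matrix.submatrix_apply, Fin.succAbove_last, Mgen, Matrix.of_apply,
              Fin.coe_castSucc, Fin.val_succ]
            have h1 : ¬ ((a:ℕ) = m+2-1) := by have := a.isLt; omega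
            have h2 : ((b:ℕ)+1 = (a:ℕ)+1) ↔ ((b:ℕ) = (a:ℕ)) := by omega
            rw [if_neg h1, if_congr h2 rfl rfl]
            ring
          rw [hlt, hlastcol]
          have hdet : (Matrix.of fun a b : Fin (m+1) =>
                  (if (b:ℕ)+1 = (a:ℕ) then z - 1 else 0) +
                  (if (b:ℕ) = (a:ℕ) then -t else 0)).det = (-t)^(m+1) := by
            rw [Matrix.det_of_lowerTriangular]
            · simp
            · intro a b hab
              simp only [Matrix.of_apply]
              have h1 : ¬ ((b:ℕ)+1 = (a:ℕ)) := by
                simp [Matrix.BlockTriangular] at hab; omega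
              have h2 : ¬ ((b:ℕ) = (a:ℕ)) := by
                simp at hab; omega
              rw [if_neg h1, if_neg h2]; ring
          rw [hdet]
          simp [Fin.val_last]
        · intro i _ hi
          rw [hlastcol]
          have : ¬ ((i:ℕ) = m) := by
            intro h; exact hi (Fin.ext h)
          rw [if_neg this]; ring
        · simp
      rw [hsum, h0, hsub0, ih]
      have hpow : (-1:ℂ)^(m+1) * c 0 * (-t)^(m+1) = c 0 * t^(m+1) := by
        rw [show ((-t)^(m+1) : ℂ) = (-1)^(m+1) * t^(m+1) by rw [neg_pow]]
        rw [show ((-1:ℂ)^(m+1)) * c 0 * ((-1:ℂ)^(m+1) * t^(m+1))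
            = ((-1:ℂ)^(m+1) * (-1:ℂ)^(m+1)) * (c 0 * t^(m+1)) by ring]
        rw [← pow_add, Even.neg_one_pow ⟨m+1, by ring⟩, one_mul]
      rw [hpow]
      rw [Fin.sum_univ_succ (f := fun j : Fin (m+2) =>
        c j * t ^ (m+2-1-(j:ℕ)) * (z-1)^(j:ℕ))]
      simp only [Fin.val_zero, Fin.val_succ, pow_zero, mul_one]
      rw [mul_add, one_mul, Finset.mul_sum]
      have hterm : ∀ j : Fin (m+1),
          (z-1) * (c j.succ * t ^ (m+1-1-(j:ℕ)) * (z-1)^(j:ℕ))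
          = c j.succ * t ^ (m+2-1-((j:ℕ)+1)) * (z-1)^((j:ℕ)+1) := by
        intro j
        have : m+1-1-(j:ℕ) = m+2-1-((j:ℕ)+1) := by omega
        rw [this]; ring
      rw [Finset.sum_congr rfl (fun j _ => hterm j)]
      have : m+2-1-(0:ℕ) = m+1 := by omega
      rw [this]
      ring

/-- `det(zI − H(λ,K)) = (z−1)^n + λ ∑_{p=1}^n τ^p K_{n−p+1} (z−1)^{n−p}`.
(The sum is reindexed by `p' = p - 1 : Fin n`; the 1-based gain `K_{n-p+1}` is the
0-based entry `K 0 ⟨n-1-p'⟩`.) -/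
theorem stmt_0 (n : ℕ) (hn : 1 ≤ n) (τ : ℝ) (hτ : 0 < τ)
    (K : Matrix (Fin 1) (Fin n) ℝ) (lam : ℝ) (z : ℂ) :
    (z • (1 : Matrix (Fin n) (Fin n) ℂ) - (Hmat n τ lam K).map (Complex.ofReal ·)).det
      = (z - 1) ^ n + (lam : ℂ) *
          ∑ p : Fin n, (τ : ℂ) ^ ((p : ℕ) + 1) *
            ((K 0 ⟨n - 1 - (p : ℕ), by have := p.isLt; omega⟩ : ℝ) : ℂ) *
            (z - 1) ^ (n - 1 - (p : ℕ)) := by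
  have hc : (z • (1 : Matrix (Fin n) (Fin n) ℂ) - (Hmat n τ lam K).map (Complex.ofReal ·))
      = Mgen z (τ:ℂ) n (fun j => (lam:ℂ) * (τ:ℂ) * ((K 0 j : ℝ) : ℂ)) := by
    ext i j
    show (z • (1 : Matrix (Fin n) (Fin n) ℂ)
       - ((Amat n τ - lam • (Bmat n τ * K)).map (Complex.ofReal ·))) i j = _
    simp only [Mgen, Matrix.sub_apply, Matrix.smul_apply, Matrix.one_apply, Matrix.map_apply,
      Amat, Bmat, Matrix.of_apply, Matrix.mul_apply, Fin.sum_univ_one, smul_eq_mul]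
    have hij : (i = j) ↔ ((j:ℕ) = (i:ℕ)) := by rw [Fin.ext_iff]; omega
    by_cases h1 : (j:ℕ) = (i:ℕ) <;> by_cases h2 : (j:ℕ) = (i:ℕ)+1 <;>
      by_cases h3 : (i:ℕ) = n-1
    all_goals simp [hij, h1, h2, h3]
    all_goals try split_ifs
    all_goals try push_cast
    all_goals try ring
    all_goals exfalso; omega
  rw [hc, aux]
  congr 1
  rw [Finset.mul_sum]
  rw [← Equiv.sum_comp (Fin.revPerm : Equiv.Perm (Fin n))
    (fun j : Fin n => (lam:ℂ) * (τ:ℂ) * ((K 0 j : ℝ):ℂ) * (τ:ℂ) ^ (n - 1 - (j:ℕ)) * (z-1) ^ (j:ℕ))]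
  apply Finset.sum_congr rfl
  intro p _
  have hp := p.isLt
  have hrev : ((Fin.revPerm p : Fin n) : ℕ) = n - 1 - (p:ℕ) := by
    simp [Fin.revPerm, Fin.rev]; omega
  have h1 : n - 1 - (n - 1 - (p:ℕ)) = (p:ℕ) := by omega
  have h2 : (Fin.revPerm p : Fin n) = ⟨n - 1 - (p:ℕ), by omega⟩ := Fin.ext hrev
  rw [h2]
  simp only [h2, Fin.val_mk] at hrev ⊢
  rw [h1]
  ring
end

section
/- Let n ≥ 1, τ > 0, and let A, B, H(λ,K) be as in the context. For every K ∈ ℝ^{1×n}, λ ∈ ℝ, and z ∈ ℂ, det(zI_n − H(λ,K)) = z^n + Σ_{j=1}^{n} b_j(λ) z^{n−j}, where b_j(λ) = λ · Σ_{p=1}^{j} (−1)^{j−p} τ^p K_{n+1−p} C(n−p, n−j) + (−1)^j C(n, n−j), and C(a,b) denotes the binomial coefficient (equal to 0 if b < 0 or b > a). -/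
open Matrix

open Finset


noncomputable def Mfam (z t : ℂ) (n : ℕ) (c : Fin n → ℂ) : Matrix (Fin n) (Fin n) ℂ :=
  Matrix.of fun i j =>
    (if (j : ℕ) = (i : ℕ) then z - 1 else if (j : ℕ) = (i : ℕ) + 1 then -t else 0)
    + (if (i : ℕ) = n - 1 then c j else 0)

lemma det_Mfam (z t : ℂ) : ∀ n (c : Fin n → ℂ),
    (Mfam z t n c).det
      = (z - 1) ^ n + ∑ j : Fin n, c j * t ^ (n - 1 - (j : ℕ)) * (z - 1) ^ (j : ℕ) := by
  intro n
  induction n with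
  | zero => intro c; simp [Matrix.det_isEmpty]
  | succ n ih =>
    intro c
    match n, ih with
    | 0, _ =>
      simp [Matrix.det_fin_one, Mfam]
    | (m+1), ih =>
      rw [Matrix.det_succ_column_zero]
      set M := Mfam z t (m+2) c with hM
      have h00 : M 0 0 = z - 1 := by
        simp [hM, Mfam]
      have hl0 : M (Fin.last (m+1)) 0 = c 0 := by
        simp [hM, Mfam, Fin.last]
      have hsub0 : M.submatrix (Fin.succ : Fin (m+1) → Fin (m+2)) Fin.succ
          = Mfam z t (m+1) (fun j => c j.succ) := by
        ext i j
        simp only [Matrix.submatrix_apply, hM, Mfam, Matrix.of_apply, Fin.val_succ]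
        have e3 : m + 2 - 1 = m + 1 := rfl
        have e4 : m + 1 - 1 = m := rfl
        rw [e3, e4]
        simp only [add_left_inj]
      have hsubl : (M.submatrix (Fin.last (m+1)).succAbove Fin.succ).det = (-t) ^ (m+1) := by
        have hterm : M.submatrix (Fin.last (m+1)).succAbove Fin.succ
            = M.submatrix Fin.castSucc Fin.succ := by
          rw [Fin.succAbove_last]
        rw [hterm]
        rw [Matrix.det_of_lowerTriangular]
        · have hdiag : ∀ i : Fin (m+1),
              (M.submatrix Fin.castSucc Fin.succ) i i = -t := by
            intro i
            have hi : (i:ℕ) < m + 1 := i.isLt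
            simp only [Matrix.submatrix_apply, hM, Mfam, Matrix.of_apply,
              Fin.coe_castSucc, Fin.val_succ]
            simp [show (i:ℕ) ≠ m + 2 - 1 by omega, show (i:ℕ) ≠ m + 1 by omega]
          rw [Finset.prod_congr rfl (fun i _ => hdiag i)]
          simp
        · intro i j hij
          simp only [OrderDual.toDual_lt_toDual] at hij
          have hij' : (i:ℕ) < (j:ℕ) := hij
          simp only [Matrix.submatrix_apply, hM, Mfam, Matrix.of_apply,
            Fin.coe_castSucc, Fin.val_succ]
          rw [if_neg (by omega), if_neg (by omega), if_neg (by omega), add_zero]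
      rw [Fin.sum_univ_succ]
      rw [Finset.sum_eq_single (Fin.last m)]
      · rw [show (Fin.last m).succ = Fin.last (m+1) from rfl]
        rw [Fin.succAbove_zero, h00, hl0, hsub0, hsubl, ih]
        rw [Fin.sum_univ_succ (n := m+1) (f := fun j : Fin (m+2) =>
          c j * t ^ (m + 1 + 1 - 1 - (j:ℕ)) * (z - 1) ^ (j:ℕ))]
        simp only [Fin.val_zero, Fin.val_succ, Fin.val_last, pow_zero, one_mul, mul_one,
          Nat.sub_zero]
        have hc1 : (-1:ℂ) ^ (m+1) * c 0 * (-t) ^ (m+1) = c 0 * t ^ (m+1) := by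
          have hh : ((-1:ℂ)) ^ (m+1) * (-t) ^ (m+1) = t ^ (m+1) := by
            rw [← mul_pow]; norm_num
          calc (-1:ℂ) ^ (m+1) * c 0 * (-t) ^ (m+1)
              = c 0 * ((-1) ^ (m+1) * (-t) ^ (m+1)) := by ring
            _ = c 0 * t ^ (m+1) := by rw [hh]
        have hc2 : ∀ j : Fin (m+1),
            c j.succ * t ^ (m + 1 + 1 - 1 - ((j:ℕ)+1)) * (z - 1) ^ ((j:ℕ)+1)
            = (z - 1) * (c j.succ * t ^ (m + 1 - 1 - (j:ℕ)) * (z - 1) ^ (j:ℕ)) := by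
          intro j
          have he : m + 1 + 1 - 1 - ((j:ℕ)+1) = m + 1 - 1 - (j:ℕ) := by omega
          rw [he, pow_succ]; ring
        rw [Finset.sum_congr rfl (fun j _ => hc2 j), ← Finset.mul_sum, hc1]
        have he2 : m + 1 + 1 - 1 = m + 1 := by omega
        rw [he2]
        ring
      · intro b _ hb
        have hb' : b.succ ≠ Fin.last (m+1) := by
          intro h
          exact hb (by
            have := congrArg Fin.val h
            simp [Fin.val_succ, Fin.val_last] at this
            exact Fin.ext this)
        have h0' : ((b.succ : Fin (m+2)) : ℕ) ≠ 0 := by simp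
        have hl' : ((b.succ : Fin (m+2)) : ℕ) ≠ m+1 := by
          intro h; exact hb' (Fin.ext (by simpa using h))
        have : M b.succ 0 = 0 := by
          simp only [hM, Mfam, Matrix.of_apply, Fin.val_zero]
          simp [Ne.symm h0', hl', show ((b.succ : Fin (m+2)) : ℕ) ≠ m + 2 - 1 by omega,
            show (b : ℕ) ≠ m by simpa [Fin.val_succ] using hl']
        rw [this]; ring
      · intro h; exact absurd (Finset.mem_univ _) h

lemma subpow' (N : ℕ) (z : ℂ) :
    (z - 1) ^ N = ∑ m ∈ range (N + 1), (-1:ℂ) ^ (N - m) * (N.choose m : ℂ) * z ^ m := by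
  rw [sub_pow]
  refine Finset.sum_congr rfl fun m hm => ?_
  rw [mem_range] at hm
  have h : m + N = (N - m) + 2 * m := by omega
  rw [h, pow_add, pow_mul]
  norm_num; ring

lemma subpow_trunc (N L : ℕ) (hNL : N < L) (z : ℂ) :
    (z - 1) ^ N = ∑ m ∈ range L, (-1:ℂ) ^ (N - m) * (N.choose m : ℂ) * z ^ m := by
  rw [subpow' N z]
  apply Finset.sum_subset
  · intro x hx; rw [mem_range] at *; omega
  · intro m hm hm2
    rw [mem_range] at hm hm2
    have : N.choose m = 0 := Nat.choose_eq_zero_of_lt (by omega)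
    simp [this]

lemma alg (n : ℕ) (hn : 1 ≤ n) (t l z : ℂ) (k : ℕ → ℂ) :
    (z - 1) ^ n + ∑ i ∈ range n, l * t * k i * t ^ (n - 1 - i) * (z - 1) ^ i
      = z ^ n + ∑ j ∈ range n,
          (l * ∑ p ∈ range (j + 1),
              (-1:ℂ) ^ (j - p) * t ^ (p + 1) * k (n - 1 - p) * ((n - 1 - p).choose (n - 1 - j) : ℂ)
            + (-1:ℂ) ^ (j + 1) * (n.choose (n - 1 - j) : ℂ)) * z ^ (n - 1 - j) := by
  -- split RHS
  have hsplit : ∀ j ∈ range n,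
      (l * ∑ p ∈ range (j + 1),
          (-1:ℂ) ^ (j - p) * t ^ (p + 1) * k (n - 1 - p) * ((n - 1 - p).choose (n - 1 - j) : ℂ)
        + (-1:ℂ) ^ (j + 1) * (n.choose (n - 1 - j) : ℂ)) * z ^ (n - 1 - j)
      = (l * ∑ p ∈ range (j + 1),
          (-1:ℂ) ^ (j - p) * t ^ (p + 1) * k (n - 1 - p) * ((n - 1 - p).choose (n - 1 - j) : ℂ))
            * z ^ (n - 1 - j)
        + (-1:ℂ) ^ (j + 1) * (n.choose (n - 1 - j) : ℂ) * z ^ (n - 1 - j) := by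
    intro j _; ring
  rw [Finset.sum_congr rfl hsplit, Finset.sum_add_distrib]
  -- binomial part
  have hB : z ^ n + ∑ j ∈ range n, (-1:ℂ) ^ (j + 1) * (n.choose (n - 1 - j) : ℂ) * z ^ (n - 1 - j)
      = (z - 1) ^ n := by
    have h1 : ∀ j ∈ range n,
        (-1:ℂ) ^ (j + 1) * (n.choose (n - 1 - j) : ℂ) * z ^ (n - 1 - j)
        = (-1:ℂ) ^ (n - (n - 1 - j)) * (n.choose (n - 1 - j) : ℂ) * z ^ (n - 1 - j) := by
      intro j hj
      rw [mem_range] at hj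
      rw [show n - (n - 1 - j) = j + 1 by omega]
    rw [Finset.sum_congr rfl h1,
      Finset.sum_range_reflect (fun m => (-1:ℂ) ^ (n - m) * (n.choose m : ℂ) * z ^ m) n,
      subpow' n z, Finset.sum_range_succ]
    simp [add_comm]
  -- gain part
  have hC : ∑ i ∈ range n, l * t * k i * t ^ (n - 1 - i) * (z - 1) ^ i
      = ∑ j ∈ range n,
          (l * ∑ p ∈ range (j + 1),
            (-1:ℂ) ^ (j - p) * t ^ (p + 1) * k (n - 1 - p) * ((n - 1 - p).choose (n - 1 - j) : ℂ))
            * z ^ (n - 1 - j) := by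
    -- reflect LHS
    rw [← Finset.sum_range_reflect (fun i => l * t * k i * t ^ (n - 1 - i) * (z - 1) ^ i) n]
    -- reflect RHS
    have h2 : ∀ j ∈ range n,
        (l * ∑ p ∈ range (j + 1),
          (-1:ℂ) ^ (j - p) * t ^ (p + 1) * k (n - 1 - p) * ((n - 1 - p).choose (n - 1 - j) : ℂ))
            * z ^ (n - 1 - j)
        = (fun m => (l * ∑ p ∈ range (n - m),
            (-1:ℂ) ^ (n - 1 - m - p) * t ^ (p + 1) * k (n - 1 - p)
              * ((n - 1 - p).choose m : ℂ)) * z ^ m) (n - 1 - j) := by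
      intro j hj
      rw [mem_range] at hj
      simp only
      rw [show n - (n - 1 - j) = j + 1 by omega, show n - 1 - (n - 1 - j) = j by omega]
    rw [Finset.sum_congr rfl h2,
      Finset.sum_range_reflect (fun m => (l * ∑ p ∈ range (n - m),
        (-1:ℂ) ^ (n - 1 - m - p) * t ^ (p + 1) * k (n - 1 - p)
          * ((n - 1 - p).choose m : ℂ)) * z ^ m) n]
    -- now both sums over range n; LHS term at p is l*t^{p+1}*k(n-1-p)*(z-1)^{n-1-p}
    have h3 : ∀ p ∈ range n,
        l * t * k (n - 1 - p) * t ^ (n - 1 - (n - 1 - p)) * (z - 1) ^ (n - 1 - p)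
        = ∑ m ∈ range n, l * ((-1:ℂ) ^ (n - 1 - m - p) * t ^ (p + 1) * k (n - 1 - p)
            * ((n - 1 - p).choose m : ℂ)) * z ^ m := by
      intro p hp
      rw [mem_range] at hp
      rw [show n - 1 - (n - 1 - p) = p by omega]
      rw [subpow_trunc (n - 1 - p) n (by omega) z, Finset.mul_sum]
      refine Finset.sum_congr rfl fun m hm => ?_
      rw [show n - 1 - m - p = n - 1 - p - m by omega, pow_succ]
      ring
    rw [Finset.sum_congr rfl h3, Finset.sum_comm]
    refine Finset.sum_congr rfl fun m hm => ?_
    rw [mem_range] at hm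
    rw [Finset.mul_sum, Finset.sum_mul]
    symm
    apply Finset.sum_subset
    · intro x hx; rw [mem_range] at *; omega
    · intro p hp hp2
      rw [mem_range] at hp hp2
      have : (n - 1 - p).choose m = 0 := Nat.choose_eq_zero_of_lt (by omega)
      simp [this]
  rw [hC]
  rw [hB.symm] at *
  ring



/-- `det(zI − H(λ,K)) = z^n + ∑_{j=1}^n b_j(λ) z^{n−j}` with
`b_j(λ) = λ ∑_{p=1}^j (−1)^{j−p} τ^p K_{n+1−p} C(n−p, n−j) + (−1)^j C(n, n−j)`.
(Sums reindexed by `j' = j-1 : Fin n` and `p' = p-1 ∈ range (j'+1)`; the 1-based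
gain `K_{n+1-p}` is the 0-based entry `K 0 ⟨n-1-p'⟩`.) -/
theorem stmt_1 (n : ℕ) (hn : 1 ≤ n) (τ : ℝ) (hτ : 0 < τ)
    (K : Matrix (Fin 1) (Fin n) ℝ) (lam : ℝ) (z : ℂ) :
    (z • (1 : Matrix (Fin n) (Fin n) ℂ) - (Hmat n τ lam K).map (Complex.ofReal ·)).det
      = z ^ n + ∑ j : Fin n,
          ((lam : ℂ) * ∑ p ∈ Finset.range ((j : ℕ) + 1),
              (-1 : ℂ) ^ ((j : ℕ) - p) * (τ : ℂ) ^ (p + 1) *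
                ((K 0 ⟨n - 1 - p, by omega⟩ : ℝ) : ℂ) *
                (Nat.choose (n - 1 - p) (n - 1 - (j : ℕ)) : ℂ)
            + (-1 : ℂ) ^ ((j : ℕ) + 1) * (Nat.choose n (n - 1 - (j : ℕ)) : ℂ)) *
            z ^ (n - 1 - (j : ℕ)) := by
  classical
  set k : ℕ → ℂ := fun i => if h : i < n then ((K 0 ⟨i, h⟩ : ℝ) : ℂ) else 0 with hk
  have hkj : ∀ j : Fin n, k (j : ℕ) = ((K 0 j : ℝ) : ℂ) := by
    intro j; rw [hk]; simp only; rw [dif_pos j.isLt]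
  have hmat : z • (1 : Matrix (Fin n) (Fin n) ℂ) - (Hmat n τ lam K).map (Complex.ofReal ·)
      = Mfam z (τ : ℂ) n (fun j => (lam : ℂ) * (τ : ℂ) * k (j : ℕ)) := by
    ext i j
    simp only [Matrix.sub_apply, Matrix.smul_apply, Matrix.one_apply, Matrix.map_apply,
      Hmat, Amat, Bmat, Matrix.sub_apply, Matrix.smul_apply, Matrix.mul_apply,
      Fin.sum_univ_one, Matrix.of_apply, Mfam, smul_eq_mul, hkj, Fin.ext_iff]
    push_cast [apply_ite Complex.ofReal]
    split_ifs <;> first | ring1 | (exfalso; omega) | (push_cast; ring1)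
  rw [hmat, det_Mfam]
  have hR : ∀ j : Fin n,
      ((lam : ℂ) * ∑ p ∈ Finset.range ((j : ℕ) + 1),
          (-1 : ℂ) ^ ((j : ℕ) - p) * (τ : ℂ) ^ (p + 1) *
            ((K 0 ⟨n - 1 - p, by omega⟩ : ℝ) : ℂ) *
            (Nat.choose (n - 1 - p) (n - 1 - (j : ℕ)) : ℂ)
        + (-1 : ℂ) ^ ((j : ℕ) + 1) * (Nat.choose n (n - 1 - (j : ℕ)) : ℂ)) *
        z ^ (n - 1 - (j : ℕ))
      = (fun J => ((lam : ℂ) * ∑ p ∈ Finset.range (J + 1),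
          (-1 : ℂ) ^ (J - p) * (τ : ℂ) ^ (p + 1) * k (n - 1 - p) *
            (Nat.choose (n - 1 - p) (n - 1 - J) : ℂ)
        + (-1 : ℂ) ^ (J + 1) * (Nat.choose n (n - 1 - J) : ℂ)) *
        z ^ (n - 1 - J)) ((j : ℕ)) := by
    intro j
    simp only
    congr 2
    · congr 1
      refine Finset.sum_congr rfl fun p hp => ?_
      rw [mem_range] at hp
      have hlt : n - 1 - p < n := by omega
      rw [hk]
      simp only
      rw [dif_pos hlt]
  rw [Finset.sum_congr rfl fun j _ => hR j]
  rw [Fin.sum_univ_eq_sum_range (fun J => ((lam : ℂ) * ∑ p ∈ Finset.range (J + 1),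
      (-1 : ℂ) ^ (J - p) * (τ : ℂ) ^ (p + 1) * k (n - 1 - p) *
        (Nat.choose (n - 1 - p) (n - 1 - J) : ℂ)
    + (-1 : ℂ) ^ (J + 1) * (Nat.choose n (n - 1 - J) : ℂ)) * z ^ (n - 1 - J)) n]
  rw [Fin.sum_univ_eq_sum_range
    (fun i => (lam : ℂ) * (τ : ℂ) * k i * (τ : ℂ) ^ (n - 1 - i) * (z - 1) ^ i) n]
  exact alg n hn (τ : ℂ) (lam : ℂ) z k
end

section
/- Let n ≥ 1, τ > 0, and let A, B, H(λ,K) be as in the context, and let G be a connected undirected graph with Laplacian L with eigenvalues 0 = λ_1 < λ_2 ≤ … ≤ λ_N as in the context. Consensus of the closed-loop system x(k+1) = (I_N ⊗ A − L ⊗ BK) x(k) is reached asymptotically (for every initial state) if and only if r(K) := max_{i=2,…,N} ρ(H(λ_i,K)) < 1, where ρ denotes the spectral radius. -/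
open Matrix Kronecker Filter

set_option maxHeartbeats 1000000

/-- Spectral radius of a real matrix: the largest modulus of its complex eigenvalues. -/
noncomputable def specRad {n : ℕ} (M : Matrix (Fin n) (Fin n) ℝ) : ℝ :=
  sSup ((fun z : ℂ => ‖z‖) '' spectrum ℂ (M.map (Complex.ofReal ·)))

attribute [local instance] Matrix.linftyOpNormedRing Matrix.linftyOpNormedAlgebra
  Matrix.linftyOpNormedAddCommGroup

lemma cmap_pow {m : ℕ} (M : Matrix (Fin m) (Fin m) ℝ) (k : ℕ) :
    (M.map (Complex.ofReal ·)) ^ k = (M ^ k).map (Complex.ofReal ·) := by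
  exact (map_pow (Complex.ofRealHom.mapMatrix) M k).symm

lemma entry_norm_le {m : ℕ} (M : Matrix (Fin m) (Fin m) ℂ) (i j : Fin m) : ‖M i j‖ ≤ ‖M‖ := by
  have h1 : ‖M i j‖₊ ≤ ∑ j' : Fin m, ‖M i j'‖₊ :=
    Finset.single_le_sum (f := fun j' => ‖M i j'‖₊) (fun _ _ => zero_le) (Finset.mem_univ j)
  have h2 : (∑ j' : Fin m, ‖M i j'‖₊) ≤ Finset.univ.sup fun i' => ∑ j' : Fin m, ‖M i' j'‖₊ :=
    Finset.le_sup (f := fun i' => ∑ j' : Fin m, ‖M i' j'‖₊) (Finset.mem_univ i)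
  have h3 := h1.trans h2
  rw [← Matrix.linfty_opNNNorm_def] at h3
  exact h3

/-- If all entries of powers tend to zero, every spectral value has modulus < 1. -/
lemma abs_lt_one_of_entries {m : ℕ} (M : Matrix (Fin m) (Fin m) ℝ)
    (h : ∀ i j : Fin m, Tendsto (fun k => (M ^ k) i j) atTop (nhds 0))
    {μ : ℂ} (hμ : μ ∈ spectrum ℂ (M.map (Complex.ofReal ·))) : ‖μ‖ < 1 := by
  set Mc := M.map (Complex.ofReal ·) with hMc
  by_contra hge
  push_neg at hge
  rw [spectrum.mem_iff] at hμ
  have hdet : (algebraMap ℂ (Matrix (Fin m) (Fin m) ℂ) μ - Mc).det = 0 := by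
    by_contra hd
    exact hμ ((Matrix.isUnit_iff_isUnit_det _).mpr (isUnit_iff_ne_zero.mpr hd))
  obtain ⟨v, hv0, hv⟩ := (Matrix.exists_mulVec_eq_zero_iff).mpr hdet
  have heig : Mc *ᵥ v = μ • v := by
    rw [Matrix.sub_mulVec, sub_eq_zero] at hv
    rw [← hv, Matrix.algebraMap_eq_diagonal]
    ext i
    simp [Matrix.mulVec, dotProduct, Matrix.diagonal, Finset.sum_ite_eq,
      Pi.algebraMap_apply]
  have hpow : ∀ k : ℕ, (Mc ^ k) *ᵥ v = (μ ^ k) • v := by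
    intro k
    induction k with
    | zero => simp
    | succ k ih =>
      rw [pow_succ, ← Matrix.mulVec_mulVec, heig, Matrix.mulVec_smul, ih, smul_smul,
        ← pow_succ']
  obtain ⟨l, hl⟩ := Function.ne_iff.mp hv0
  have htend : Tendsto (fun k => ((Mc ^ k) *ᵥ v) l) atTop (nhds 0) := by
    have he : ∀ k, ((Mc ^ k) *ᵥ v) l = ∑ j, Complex.ofReal ((M ^ k) l j) * v j := by
      intro k; rw [cmap_pow]; simp [Matrix.mulVec, dotProduct, Matrix.map_apply]
    simp_rw [he]
    have h2 : Tendsto (fun k => ∑ j, Complex.ofReal ((M ^ k) l j) * v j) atTop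
        (nhds (∑ j : Fin m, (0:ℂ) * v j)) := by
      apply tendsto_finset_sum
      intro j _
      exact (((Complex.continuous_ofReal.tendsto 0).comp (h l j)).congr (by simp)).mul_const _
    simpa using h2
  have hnorm : ∀ k, ‖((Mc ^ k) *ᵥ v) l‖ = ‖μ‖ ^ k * ‖v l‖ := by
    intro k; rw [hpow k]; simp [norm_smul]
  have hlb : ∀ k, ‖v l‖ ≤ ‖((Mc ^ k) *ᵥ v) l‖ := by
    intro k; rw [hnorm k]
    have h1 : (1:ℝ) ≤ ‖μ‖ ^ k := one_le_pow₀ hge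
    nlinarith [norm_nonneg (v l)]
  have hvl : (0:ℝ) < ‖v l‖ := by simpa [norm_pos_iff] using hl
  have hev := (by simpa using htend.norm : Tendsto (fun k => ‖((Mc ^ k) *ᵥ v) l‖) atTop (nhds 0)).eventually_lt_const hvl
  obtain ⟨k, hk⟩ := hev.exists
  exact absurd (hlb k) (not_le.mpr hk)

lemma specRad_lt_one_iff_abs {m : ℕ} (hm : 0 < m) (M : Matrix (Fin m) (Fin m) ℝ) :
    specRad M < 1 ↔ ∀ μ ∈ spectrum ℂ (M.map (Complex.ofReal ·)), ‖μ‖ < 1 := by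
  haveI : Nonempty (Fin m) := ⟨⟨0, hm⟩⟩
  set Mc := M.map (Complex.ofReal ·) with hMc
  have hcomp : IsCompact ((fun z : ℂ => ‖z‖) '' spectrum ℂ Mc) :=
    (spectrum.isCompact Mc).image continuous_norm
  have hne : ((fun z : ℂ => ‖z‖) '' spectrum ℂ Mc).Nonempty := (spectrum.nonempty Mc).image _
  constructor
  · intro h μ hμ
    exact lt_of_le_of_lt (le_csSup hcomp.bddAbove ⟨μ, hμ, rfl⟩) h
  · intro h
    obtain ⟨μ, hμ, he⟩ := hcomp.sSup_mem hne
    rw [specRad, ← hMc, ← he]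
    exact h μ hμ

lemma entries_tendsto_of_specRad_lt_one {m : ℕ} (hm : 0 < m) (M : Matrix (Fin m) (Fin m) ℝ)
    (h : specRad M < 1) : ∀ i j, Tendsto (fun k => (M ^ k) i j) atTop (nhds 0) := by
  haveI : Nonempty (Fin m) := ⟨⟨0, hm⟩⟩
  set Mc := M.map (Complex.ofReal ·) with hMc
  have hρ : spectralRadius ℂ Mc < 1 := by
    obtain ⟨μ, hμ, he⟩ :=
      spectrum.exists_nnnorm_eq_spectralRadius_of_nonempty (spectrum.nonempty Mc)
    rw [← he]
    have h1 : ‖μ‖ < 1 := (specRad_lt_one_iff_abs hm M).mp h μ hμ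
    rw [← coe_nnnorm] at h1
    exact_mod_cast h1
  obtain ⟨r, hr1, hr2⟩ := ENNReal.lt_iff_exists_nnreal_btwn.mp hρ
  have hev : ∀ᶠ k : ℕ in atTop, ((‖Mc ^ k‖₊ : ENNReal) ^ (1/(k:ℝ)) : ENNReal) < (r : ENNReal) :=
    (spectrum.pow_nnnorm_pow_one_div_tendsto_nhds_spectralRadius Mc).eventually_lt_const hr1
  have hbd : ∀ᶠ k : ℕ in atTop, ‖Mc ^ k‖ ≤ (r : ℝ) ^ k := by
    filter_upwards [hev, eventually_ge_atTop 1] with k hk hk1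
    have hk0 : (k : ℝ) ≠ 0 := by positivity
    have e1 : ((‖Mc ^ k‖₊ : ENNReal) ^ (1/(k:ℝ)) : ENNReal) ^ (k : ℕ)
        = (‖Mc ^ k‖₊ : ENNReal) := by
      rw [← ENNReal.rpow_natCast (_ ^ (1/(k:ℝ))) k, ← ENNReal.rpow_mul]
      rw [one_div_mul_cancel hk0, ENNReal.rpow_one]
    have e2 : (‖Mc ^ k‖₊ : ENNReal) ≤ (r : ENNReal) ^ (k : ℕ) := by
      rw [← e1]; exact pow_le_pow_left' hk.le k
    rw [← ENNReal.coe_pow, ENNReal.coe_le_coe] at e2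
    exact_mod_cast e2
  intro i j
  rw [tendsto_zero_iff_norm_tendsto_zero]
  refine squeeze_zero' (Eventually.of_forall fun k => norm_nonneg _) ?_
    (tendsto_pow_atTop_nhds_zero_of_lt_one r.coe_nonneg (by exact_mod_cast hr2))
  filter_upwards [hbd] with k hk
  have h5 : ‖(Mc ^ k) i j‖ ≤ ‖Mc ^ k‖ := entry_norm_le _ i j
  have h6 := h5.trans hk
  rw [cmap_pow] at h6
  simpa [Matrix.map_apply] using h6

lemma specRad_lt_one_iff_mulVec {m : ℕ} (hm : 0 < m) (M : Matrix (Fin m) (Fin m) ℝ) :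
    (∀ x : Fin m → ℝ, ∀ l, Tendsto (fun k => ((M ^ k) *ᵥ x) l) atTop (nhds 0))
      ↔ specRad M < 1 := by
  constructor
  · intro h
    rw [specRad_lt_one_iff_abs hm M]
    intro μ hμ
    refine abs_lt_one_of_entries M (fun i j => ?_) hμ
    have := h (Pi.single j 1) i
    simpa [Matrix.mulVec_single] using this
  · intro h x l
    have hent := entries_tendsto_of_specRad_lt_one hm M h
    have : Tendsto (fun k => ∑ j, (M ^ k) l j * x j) atTop (nhds (∑ j : Fin m, 0 * x j)) :=
      tendsto_finset_sum _ fun j _ => (hent l j).mul_const _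
    simpa [Matrix.mulVec, dotProduct] using this

/-- for the closed-loop system `x(k+1) = (I_N ⊗ A − L ⊗ BK) x(k)` on a
connected graph with Laplacian eigenvalues `0 = λ_1 < λ_2 ≤ … ≤ λ_N`, consensus is
reached asymptotically for every initial state iff
`r(K) = max_{i ≥ 2} ρ(H(λ_i, K)) < 1`, i.e. iff `ρ(H(λ_i, K)) < 1` for all `i ≠ 1`. -/
theorem stmt_3 (n : ℕ) (hn : 1 ≤ n) (τ : ℝ) (hτ : 0 < τ)
    (N : ℕ) (hN : 2 ≤ N) (L : Matrix (Fin N) (Fin N) ℝ)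
    (lam : Fin N → ℝ) (hmono : Monotone lam) (hlam0 : lam ⟨0, by omega⟩ = 0)
    (hlampos : ∀ i : Fin N, i ≠ ⟨0, by omega⟩ → 0 < lam i)
    (hL1 : L *ᵥ (fun _ => (1 : ℝ)) = 0)
    (hdiag : ∃ V : Matrix (Fin N) (Fin N) ℝ, Vᵀ * V = 1 ∧ L = V * Matrix.diagonal lam * Vᵀ)
    (K : Matrix (Fin 1) (Fin n) ℝ) :
    (∀ x0 : Fin N × Fin n → ℝ, ∀ i j : Fin N, ∀ l : Fin n,
        Tendsto (fun k : ℕ =>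
            ((((1 : Matrix (Fin N) (Fin N) ℝ) ⊗ₖ Amat n τ - L ⊗ₖ (Bmat n τ * K)) ^ k) *ᵥ x0) (i, l)
          - ((((1 : Matrix (Fin N) (Fin N) ℝ) ⊗ₖ Amat n τ - L ⊗ₖ (Bmat n τ * K)) ^ k) *ᵥ x0) (j, l))
          atTop (nhds 0))
    ↔ (∀ i : Fin N, i ≠ ⟨0, by omega⟩ → specRad (Hmat n τ (lam i) K) < 1) := by
  obtain ⟨V, hV, hL⟩ := hdiag
  set z0 : Fin N := ⟨0, by omega⟩ with hz0
  set A := Amat n τ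
  set BK := Bmat n τ * K with hBK
  set D := Matrix.diagonal lam with hD
  set H : Fin N → Matrix (Fin n) (Fin n) ℝ := fun i => Hmat n τ (lam i) K with hH
  set M : Matrix (Fin N × Fin n) (Fin N × Fin n) ℝ :=
    (1 : Matrix (Fin N) (Fin N) ℝ) ⊗ₖ A - L ⊗ₖ BK with hM
  set P : Matrix (Fin N × Fin n) (Fin N × Fin n) ℝ := V ⊗ₖ (1 : Matrix (Fin n) (Fin n) ℝ) with hP
  set Q : Matrix (Fin N × Fin n) (Fin N × Fin n) ℝ := Vᵀ ⊗ₖ (1 : Matrix (Fin n) (Fin n) ℝ) with hQ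
  set Md : Matrix (Fin N × Fin n) (Fin N × Fin n) ℝ :=
    (1 : Matrix (Fin N) (Fin N) ℝ) ⊗ₖ A - D ⊗ₖ BK with hMd
  have hVVt : V * Vᵀ = 1 := mul_eq_one_comm.mp hV
  have hQP : Q * P = 1 := by
    rw [hQ, hP, ← Matrix.mul_kronecker_mul, hV, mul_one, Matrix.one_kronecker_one]
  have hPQ : P * Q = 1 := by
    rw [hQ, hP, ← Matrix.mul_kronecker_mul, hVVt, mul_one, Matrix.one_kronecker_one]
  have hMeq : M = P * Md * Q := by
    rw [hMd, Matrix.mul_sub, Matrix.sub_mul, hP, hQ,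
      ← Matrix.mul_kronecker_mul, ← Matrix.mul_kronecker_mul,
      ← Matrix.mul_kronecker_mul, ← Matrix.mul_kronecker_mul, hM, hL]
    simp [hVVt]
  have hMk : ∀ k : ℕ, M ^ k = P * Md ^ k * Q := by
    intro k
    induction k with
    | zero => simpa using hPQ.symm
    | succ k ih =>
      rw [pow_succ, ih, hMeq, pow_succ]
      simp only [Matrix.mul_assoc]
      rw [← Matrix.mul_assoc Q P (Md * Q), hQP, Matrix.one_mul]
  -- entries of Md
  have hMdE : ∀ (p j : Fin N) (q m' : Fin n),
      Md (p, q) (j, m') = if p = j then H j q m' else 0 := by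
    intro p j q m'
    rw [hMd]
    by_cases hpj : p = j
    · subst hpj
      simp [Matrix.kroneckerMap_apply, Matrix.one_apply, Matrix.diagonal_apply, hD, hH, Hmat,
        Matrix.sub_apply, Matrix.smul_apply, smul_eq_mul]
      rfl
    · simp [Matrix.kroneckerMap_apply, Matrix.one_apply, Matrix.diagonal_apply, hD, hpj,
        Matrix.sub_apply]
  have hMdpow : ∀ (k : ℕ) (i j : Fin N) (l m' : Fin n),
      (Md ^ k) (i, l) (j, m') = if i = j then ((H j) ^ k) l m' else 0 := by
    intro k
    induction k with
    | zero =>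
      intro i j l m'
      by_cases hij : i = j
      · subst hij; simp [Matrix.one_apply, Prod.ext_iff]
      · simp [Matrix.one_apply, Prod.ext_iff, hij]
    | succ k ih =>
      intro i j l m'
      rw [pow_succ, Matrix.mul_apply, Fintype.sum_prod_type]
      simp_rw [ih, hMdE, ite_mul, mul_ite, zero_mul, mul_zero]
      by_cases hij : i = j
      · subst hij
        simp [Finset.sum_ite_eq, Finset.sum_ite_eq', pow_succ, Matrix.mul_apply]
      · simp [Finset.sum_ite_eq, Finset.sum_ite_eq', hij]
  have hMdvec : ∀ (k : ℕ) (y : Fin N × Fin n → ℝ) (j : Fin N) (l : Fin n),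
      ((Md ^ k) *ᵥ y) (j, l) = (((H j) ^ k) *ᵥ fun m' => y (j, m')) l := by
    intro k y j l
    rw [Matrix.mulVec, dotProduct, Fintype.sum_prod_type]
    rw [Finset.sum_eq_single j]
    · show (∑ m' : Fin n, (Md ^ k) (j, l) (j, m') * y (j, m')) = _
      simp_rw [hMdpow k]
      simp only [if_pos]
      rfl
    · intro j' _ hj'
      simp_rw [hMdpow k, if_neg (Ne.symm hj'), zero_mul, Finset.sum_const_zero]
    · intro h; exact absurd (Finset.mem_univ j) h
  -- master formula
  have hform : ∀ (x0 : Fin N × Fin n → ℝ) (k : ℕ) (p : Fin N) (l : Fin n),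
      ((M ^ k) *ᵥ x0) (p, l)
        = ∑ j : Fin N, V p j * (((H j) ^ k) *ᵥ fun m' => (Q *ᵥ x0) (j, m')) l := by
    intro x0 k p l
    rw [hMk k, Matrix.mul_assoc, ← Matrix.mulVec_mulVec, ← Matrix.mulVec_mulVec]
    rw [Matrix.mulVec, dotProduct, Fintype.sum_prod_type]
    refine Finset.sum_congr rfl fun j _ => ?_
    have he : ∀ m' : Fin n, P (p, l) (j, m') * ((Md ^ k) *ᵥ (Q *ᵥ x0)) (j, m')
        = if l = m' then V p j * ((Md ^ k) *ᵥ (Q *ᵥ x0)) (j, m') else 0 := by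
      intro m'
      rw [hP]
      by_cases h : l = m' <;> simp [Matrix.one_apply, h, Matrix.kroneckerMap_apply]
    simp_rw [he]
    rw [Finset.sum_ite_eq Finset.univ l]
    simp only [Finset.mem_univ, if_pos]
    rw [hMdvec k]
  -- column facts
  set w : Fin N → ℝ := Vᵀ *ᵥ (fun _ => 1) with hw
  have hVw : V *ᵥ w = fun _ => (1:ℝ) := by
    rw [hw, Matrix.mulVec_mulVec, hVVt, Matrix.one_mulVec]
  have hDw : D *ᵥ w = 0 := by
    have h1 : Vᵀ *ᵥ (L *ᵥ (fun _ => (1:ℝ))) = 0 := by rw [hL1, Matrix.mulVec_zero]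
    rw [hL, Matrix.mulVec_mulVec,
      show Vᵀ * (V * D * Vᵀ) = D * Vᵀ by
        rw [← Matrix.mul_assoc, ← Matrix.mul_assoc, hV, Matrix.one_mul],
      ← Matrix.mulVec_mulVec] at h1
    exact h1
  have hwi : ∀ i : Fin N, i ≠ z0 → w i = 0 := by
    intro i hi
    have h2 : (D *ᵥ w) i = lam i * w i := by
      rw [hD]
      simp [Matrix.mulVec, dotProduct, Matrix.diagonal_apply, ite_mul, zero_mul,
        Finset.sum_ite_eq]
    rw [hDw] at h2
    have h3 : lam i * w i = 0 := by rw [← h2]; rfl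
    rcases mul_eq_zero.mp h3 with h | h
    · exact absurd h (ne_of_gt (hlampos i hi))
    · exact h
  have hwz0 : w z0 ≠ 0 := by
    intro h0
    have hwzero : w = 0 := by
      funext i
      by_cases hi : i = z0
      · rw [hi, h0]; rfl
      · exact hwi i hi
    rw [hwzero, Matrix.mulVec_zero] at hVw
    have h4 := congrFun hVw z0
    simp at h4
  have hcol0 : ∀ p : Fin N, V p z0 = (w z0)⁻¹ := by
    intro p
    have h1 := congrFun hVw p
    have h2 : (V *ᵥ w) p = V p z0 * w z0 := by
      rw [Matrix.mulVec, dotProduct]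
      rw [Finset.sum_eq_single z0]
      · intro j _ hj; rw [hwi j hj, mul_zero]
      · intro h; exact absurd (Finset.mem_univ _) h
    rw [h2] at h1
    exact eq_inv_of_mul_eq_one_right ((mul_comm (w z0) (V p z0)).trans h1)
  have hcolne : ∀ i : Fin N, i ≠ z0 → ∃ p q : Fin N, V p i ≠ V q i := by
    intro i hi
    by_contra hc
    push_neg at hc
    have hc' : ∀ p : Fin N, V p i = V z0 i := fun p => hc p z0
    have hsum0 : (Vᵀ * V) z0 i = (N : ℝ) * ((w z0)⁻¹ * V z0 i) := by
      rw [Matrix.mul_apply]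
      rw [Finset.sum_congr rfl fun p _ => by
        rw [Matrix.transpose_apply, hcol0 p, hc' p]]
      rw [Finset.sum_const, Finset.card_univ, Fintype.card_fin, nsmul_eq_mul]
    have hz : (1 : Matrix (Fin N) (Fin N) ℝ) z0 i = 0 := Matrix.one_apply_ne (Ne.symm hi)
    rw [hV, hz] at hsum0
    have hNne : (N : ℝ) ≠ 0 := by positivity
    have hinv : (w z0)⁻¹ ≠ 0 := inv_ne_zero hwz0
    have hc0 : V z0 i = 0 := by
      rcases mul_eq_zero.mp hsum0.symm with h | h
      · exact absurd h hNne
      · rcases mul_eq_zero.mp h with h' | h'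
        · exact absurd h' hinv
        · exact h'
    have hsum1 : (Vᵀ * V) i i = 0 := by
      rw [Matrix.mul_apply]
      apply Finset.sum_eq_zero
      intro p _
      rw [Matrix.transpose_apply, hc' p, hc0, mul_zero]
    rw [hV, Matrix.one_apply_eq] at hsum1
    exact one_ne_zero hsum1
  have hn' : 0 < n := by omega
  constructor
  · intro hcons i hi
    have hres : specRad (H i) < 1 := by
      rw [← specRad_lt_one_iff_mulVec hn']
      intro x l
      obtain ⟨p, q, hpq⟩ := hcolne i hi
      set y0 : Fin N × Fin n → ℝ := fun jm => if jm.1 = i then x jm.2 else 0 with hy0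
      have hQx : Q *ᵥ (P *ᵥ y0) = y0 := by
        rw [Matrix.mulVec_mulVec, hQP, Matrix.one_mulVec]
      have hcons' := hcons (P *ᵥ y0) p q l
      have hdiff : ∀ k : ℕ, ((M ^ k) *ᵥ (P *ᵥ y0)) (p, l) - ((M ^ k) *ᵥ (P *ᵥ y0)) (q, l)
          = (V p i - V q i) * (((H i) ^ k) *ᵥ x) l := by
        intro k
        rw [hform, hform, ← Finset.sum_sub_distrib]
        rw [Finset.sum_eq_single i]
        · rw [hQx, show (fun m' => y0 (i, m')) = x from funext fun m' => by simp [hy0]]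
          ring
        · intro j _ hj
          rw [hQx, show (fun m' => y0 (j, m')) = (0 : Fin n → ℝ) from
            funext fun m' => by simp [hy0, hj]]
          rw [Matrix.mulVec_zero]
          simp
        · intro h; exact absurd (Finset.mem_univ _) h
      rw [funext hdiff] at hcons'
      have hcne : V p i - V q i ≠ 0 := sub_ne_zero.mpr hpq
      have h4 := hcons'.const_mul (V p i - V q i)⁻¹
      rw [mul_zero] at h4
      refine h4.congr fun k => ?_
      rw [← mul_assoc, inv_mul_cancel₀ hcne, one_mul]
    exact hres
  · intro hρ x0 p q l
    have hdiff : ∀ k : ℕ, ((M ^ k) *ᵥ x0) (p, l) - ((M ^ k) *ᵥ x0) (q, l)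
        = ∑ j : Fin N, (V p j - V q j) * (((H j) ^ k) *ᵥ fun m' => (Q *ᵥ x0) (j, m')) l := by
      intro k
      rw [hform, hform, ← Finset.sum_sub_distrib]
      exact Finset.sum_congr rfl fun j _ => by ring
    rw [funext hdiff]
    have h0 : Tendsto (fun k : ℕ =>
        ∑ j : Fin N, (V p j - V q j) * (((H j) ^ k) *ᵥ fun m' => (Q *ᵥ x0) (j, m')) l)
        atTop (nhds (∑ _j : Fin N, (0:ℝ))) := by
      apply tendsto_finset_sum
      intro j _
      by_cases hj : j = z0
      · subst hj
        have hz : V p z0 - V q z0 = 0 := by rw [hcol0 p, hcol0 q, sub_self]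
        simp [hz]
      · have hsr : specRad (H j) < 1 := hρ j hj
        have ht := (specRad_lt_one_iff_mulVec hn' (H j)).mpr hsr
          (fun m' => (Q *ᵥ x0) (j, m')) l
        have := ht.const_mul (V p j - V q j)
        rwa [mul_zero] at this
    simpa using h0
end

section
/- Let n ≥ 1, τ > 0, and let A, B, H(λ,K) be as in the context. Let 0 < λ_2 ≤ λ_N be real numbers. Then for every row vector K ∈ ℝ^{1×n}, max( ρ(H(λ_2,K)), ρ(H(λ_N,K)) ) ≥ ((λ_N − λ_2)/(λ_N + λ_2))^{1/n}, where ρ denotes the spectral radius. In particular, the consensus convergence rate r(K) = max_{i=2,…,N} ρ(H(λ_i,K)) of the high-order multi-agent system on any connected graph whose Laplacian has smallest nonzero eigenvalue λ_2 and largest eigenvalue λ_N is bounded below by ((λ_N − λ_2)/(λ_N + λ_2))^{1/n}. -/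
open Matrix

open Polynomial in
lemma my_eval_charpoly_eq {m : ℕ} (M : Matrix (Fin m) (Fin m) ℂ) (μ : ℂ) :
    M.charpoly.eval μ = (Matrix.diagonal (fun _ => μ) - M).det := by
  have h := (RingHom.map_det (Polynomial.evalRingHom μ) (Matrix.charmatrix M))
  rw [Matrix.charpoly, ← Polynomial.coe_evalRingHom, h]
  congr 1
  ext i j
  by_cases hij : i = j
  · subst hij
    simp [Matrix.charmatrix_apply_eq, Matrix.diagonal_apply_eq, RingHom.mapMatrix_apply,
      Matrix.map_apply]
  · simp [Matrix.charmatrix_apply_ne _ _ _ hij, Matrix.diagonal_apply_ne _ hij,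
      RingHom.mapMatrix_apply, Matrix.map_apply]

lemma my_root_mem_spectrum {m : ℕ} (M : Matrix (Fin m) (Fin m) ℂ) (μ : ℂ)
    (h : μ ∈ M.charpoly.roots) : μ ∈ spectrum ℂ M := by
  rw [spectrum.mem_iff]
  intro hunit
  have hroot : M.charpoly.eval μ = 0 := Polynomial.isRoot_of_mem_roots h
  rw [my_eval_charpoly_eq] at hroot
  have heq : algebraMap ℂ (Matrix (Fin m) (Fin m) ℂ) μ - M
      = Matrix.diagonal (fun _ => μ) - M := by
    ext i j
    by_cases hij : i = j
    · subst hij; simp [Matrix.algebraMap_matrix_apply, Matrix.sub_apply]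
    · simp [Matrix.algebraMap_matrix_apply, hij, Matrix.sub_apply,
        Matrix.diagonal_apply_ne _ hij]
  rw [heq] at hunit
  have := (Matrix.isUnit_iff_isUnit_det _).mp hunit
  rw [hroot] at this
  exact (not_isUnit_zero this).elim

lemma my_ms_prod_le (ρ : ℝ) (s : Multiset ℝ) (h0 : ∀ x ∈ s, 0 ≤ x) (h : ∀ x ∈ s, x ≤ ρ) :
    s.prod ≤ ρ ^ Multiset.card s := by
  induction s using Multiset.induction with
  | empty => simp
  | cons a t ih =>
    have ha0 : 0 ≤ a := h0 a (Multiset.mem_cons_self a t)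
    have haρ : a ≤ ρ := h a (Multiset.mem_cons_self a t)
    have ht0 : ∀ x ∈ t, 0 ≤ x := fun x hx => h0 x (Multiset.mem_cons_of_mem hx)
    have htρ : ∀ x ∈ t, x ≤ ρ := fun x hx => h x (Multiset.mem_cons_of_mem hx)
    have hp0 : 0 ≤ t.prod := Multiset.prod_nonneg ht0
    simp only [Multiset.prod_cons, Multiset.card_cons, pow_succ']
    exact mul_le_mul haρ (ih ht0 htρ) hp0 (le_trans ha0 haρ)

lemma my_specRad_facts {n : ℕ} (hn : 1 ≤ n) (M : Matrix (Fin n) (Fin n) ℝ) :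
    0 ≤ specRad M ∧ |M.det| ≤ specRad M ^ n := by
  set M' : Matrix (Fin n) (Fin n) ℂ := M.map (Complex.ofReal ·) with hM'
  have hdet : M'.det = (M.det : ℂ) := by
    rw [hM']
    exact (RingHom.map_det Complex.ofRealHom M).symm
  have hsplits : M'.charpoly.Splits := IsAlgClosed.splits _
  have hcard : Multiset.card M'.charpoly.roots = n := by
    rw [(Polynomial.splits_iff_card_roots).mp hsplits, Matrix.charpoly_natDegree_eq_dim,
      Fintype.card_fin]
  have hbdd : BddAbove ((fun z : ℂ => ‖z‖) '' spectrum ℂ M') :=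
    ((Matrix.finite_spectrum M').image (fun z : ℂ => ‖z‖)).bddAbove
  have hle : ∀ μ ∈ M'.charpoly.roots, ‖μ‖ ≤ specRad M := by
    intro μ hμ
    exact le_csSup hbdd ⟨μ, my_root_mem_spectrum M' μ hμ, rfl⟩
  have hne : M'.charpoly.roots ≠ 0 := by
    intro h
    rw [h] at hcard
    simp at hcard
    omega
  obtain ⟨μ0, hμ0⟩ := Multiset.exists_mem_of_ne_zero hne
  have h0 : 0 ≤ specRad M := le_trans (norm_nonneg μ0) (hle μ0 hμ0)
  refine ⟨h0, ?_⟩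
  have hprod : M'.det = M'.charpoly.roots.prod := Matrix.det_eq_prod_roots_charpoly M'
  have habs : |M.det| = (M'.charpoly.roots.map (fun z : ℂ => ‖z‖)).prod := by
    rw [← Real.norm_eq_abs, ← Complex.norm_real, ← hdet, hprod]
    exact map_multiset_prod (normHom : ℂ →*₀ ℝ) _
  rw [habs]
  have := my_ms_prod_le (specRad M) (M'.charpoly.roots.map (fun z : ℂ => ‖z‖))
    (by intro x hx; obtain ⟨μ, _, rfl⟩ := Multiset.mem_map.mp hx; exact norm_nonneg μ)
    (by intro x hx; obtain ⟨μ, hμ, rfl⟩ := Multiset.mem_map.mp hx; exact hle μ hμ)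
  rwa [Multiset.card_map, hcard] at this

lemma my_det_Amat (n : ℕ) (τ : ℝ) : (Amat n τ).det = 1 := by
  have htri : (Amat n τ).BlockTriangular id := by
    intro i j hij
    simp only [id] at hij
    have h1 : (j : ℕ) ≠ (i : ℕ) := by omega
    have h2 : (j : ℕ) ≠ (i : ℕ) + 1 := by omega
    simp [Amat, h1, h2]
  rw [Matrix.det_of_upperTriangular htri]
  simp [Amat]

lemma my_det_Hmat (n : ℕ) (hn : 1 ≤ n) (τ : ℝ) (lam : ℝ) (K : Matrix (Fin 1) (Fin n) ℝ) :
    (Hmat n τ lam K).det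
      = 1 - lam * (τ * ((Amat n τ).updateRow ⟨n - 1, by omega⟩ (K 0)).det) := by
  set i₀ : Fin n := ⟨n - 1, by omega⟩
  have heq : Hmat n τ lam K
      = (Amat n τ).updateRow i₀ (Amat n τ i₀ + (-(lam * τ)) • K 0) := by
    ext i j
    by_cases hi : i = i₀
    · subst hi
      simp [Hmat, Matrix.updateRow_self, Matrix.sub_apply, Matrix.mul_apply, Bmat,
        Fin.sum_univ_succ, i₀]
      ring
    · have hni : (i : ℕ) ≠ n - 1 := by
        intro h
        exact hi (Fin.ext h)
      rw [Matrix.updateRow_ne hi]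
      simp [Hmat, Matrix.sub_apply, Matrix.mul_apply, Bmat, Fin.sum_univ_succ, hni]
  rw [heq, Matrix.det_updateRow_add, Matrix.det_updateRow_smul, Matrix.updateRow_eq_self,
    my_det_Amat]
  ring

/-- for all `0 < λ₂ ≤ λ_N` and every gain row vector `K`,
`max(ρ(H(λ₂,K)), ρ(H(λ_N,K))) ≥ ((λ_N − λ₂)/(λ_N + λ₂))^{1/n}` (real power). -/
theorem stmt_6 (n : ℕ) (hn : 1 ≤ n) (τ : ℝ) (hτ : 0 < τ)
    (l2 lN : ℝ) (h2 : 0 < l2) (h2N : l2 ≤ lN)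
    (K : Matrix (Fin 1) (Fin n) ℝ) :
    ((lN - l2) / (lN + l2)) ^ ((1 : ℝ) / n)
      ≤ max (specRad (Hmat n τ l2 K)) (specRad (Hmat n τ lN K)) := by
  set d : ℝ := τ * ((Amat n τ).updateRow ⟨n - 1, by omega⟩ (K 0)).det with hd
  obtain ⟨hρ2_0, hρ2⟩ := my_specRad_facts hn (Hmat n τ l2 K)
  obtain ⟨hρN_0, hρN⟩ := my_specRad_facts hn (Hmat n τ lN K)
  rw [my_det_Hmat n hn τ l2 K, ← hd] at hρ2
  rw [my_det_Hmat n hn τ lN K, ← hd] at hρN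
  set ρ2 := specRad (Hmat n τ l2 K)
  set ρN := specRad (Hmat n τ lN K)
  set m := max ρ2 ρN with hm
  have hm0 : 0 ≤ m := le_trans hρ2_0 (le_max_left _ _)
  set x := |1 - l2 * d|
  set y := |1 - lN * d|
  have hlN : 0 < lN := lt_of_lt_of_le h2 h2N
  have hsum : 0 < lN + l2 := by linarith
  -- key scalar inequality
  have hkey : (lN - l2) / (lN + l2) ≤ max x y := by
    rw [div_le_iff₀ hsum]
    have h1 : lN - l2 = |lN * (1 - l2 * d) - l2 * (1 - lN * d)| := by
      rw [show lN * (1 - l2 * d) - l2 * (1 - lN * d) = lN - l2 by ring,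
        abs_of_nonneg (by linarith)]
    have h2' : |lN * (1 - l2 * d) - l2 * (1 - lN * d)|
        ≤ lN * x + l2 * y := by
      calc |lN * (1 - l2 * d) - l2 * (1 - lN * d)|
          ≤ |lN * (1 - l2 * d)| + |l2 * (1 - lN * d)| := abs_sub _ _
        _ = lN * x + l2 * y := by
            rw [abs_mul, abs_mul, abs_of_pos hlN, abs_of_pos h2]
    have h3 : lN * x + l2 * y ≤ lN * max x y + l2 * max x y := by
      have := mul_le_mul_of_nonneg_left (le_max_left x y) (le_of_lt hlN)
      have := mul_le_mul_of_nonneg_left (le_max_right x y) (le_of_lt h2)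
      linarith
    calc lN - l2 = |lN * (1 - l2 * d) - l2 * (1 - lN * d)| := h1
      _ ≤ lN * x + l2 * y := h2'
      _ ≤ lN * max x y + l2 * max x y := h3
      _ = max x y * (lN + l2) := by ring
  -- chain up to m ^ n
  have hxm : x ≤ m ^ n := le_trans hρ2 (pow_le_pow_left₀ hρ2_0 (le_max_left _ _) n)
  have hym : y ≤ m ^ n := le_trans hρN (pow_le_pow_left₀ hρN_0 (le_max_right _ _) n)
  have hchain : (lN - l2) / (lN + l2) ≤ m ^ n :=
    le_trans hkey (max_le hxm hym)
  have hr0 : 0 ≤ (lN - l2) / (lN + l2) := div_nonneg (by linarith) (le_of_lt hsum)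
  have hn0 : (n : ℝ) ≠ 0 := Nat.cast_ne_zero.mpr (by omega)
  calc ((lN - l2) / (lN + l2)) ^ ((1 : ℝ) / n)
      ≤ (m ^ n) ^ ((1 : ℝ) / n) :=
        Real.rpow_le_rpow hr0 hchain (by positivity)
    _ = m := by
        rw [← Real.rpow_natCast m n, ← Real.rpow_mul hm0,
          show (n : ℝ) * ((1 : ℝ) / n) = 1 by field_simp, Real.rpow_one]
end

section
/- Let n ≥ 1, τ > 0, and let A, B, H(λ,K) be as in the context. Suppose λ_2 = 1 and λ_N = N > 1 (the two distinct nonzero Laplacian eigenvalues of an unweighted star graph on N nodes). Set r* = ((N − 1)/(N + 1))^{1/n} and let K* be defined by the recursion: f_q = ((−1)^q / (2N)) [ (r*)^{−n+2q} C(n,q)(N − 1) − C(n, n−q)(N + 1) ] for q = 1,…,n; K*_n = f_1/τ; and for j = n−1 down to 1, K*_j = (1/τ^{n+1−j}) ( f_{n+1−j} + Σ_{i=1}^{n−j} K*_{j+i} (−1)^{i+1} τ^{n−j+1−i} C(j−1+i, j−1) ). Then every complex eigenvalue of H(1,K*) and every complex eigenvalue of H(N,K*) has modulus exactly r*; in particular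 max( ρ(H(1,K*)), ρ(H(N,K*)) ) = r*, so the lower bound ((N−1)/(N+1))^{1/n} on the convergence rate is attained. -/
open Matrix Finset

/-- `r* = ((λ_N − λ₂)/(λ_N + λ₂))^{1/n}` (real power). -/
noncomputable def rstar (n : ℕ) (l2 lN : ℝ) : ℝ :=
  ((lN - l2) / (lN + l2)) ^ ((1 : ℝ) / n)

/-- `f_q = ((−1)^q/(2λ₂λ_N)) [ (r*)^{−n+2q} C(n,q)(λ_N−λ₂) − C(n,n−q)(λ_N+λ₂) ]`
(the power of `r*` with the possibly negative real exponent `2q − n`). -/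
noncomputable def fcoef (n : ℕ) (l2 lN : ℝ) (q : ℕ) : ℝ :=
  ((-1 : ℝ) ^ q / (2 * l2 * lN)) *
    ((rstar n l2 lN) ^ (2 * (q : ℝ) - (n : ℝ)) * (Nat.choose n q) * (lN - l2)
      - (Nat.choose n (n - q)) * (lN + l2))

/-- `KstarAux n τ l2 lN d` is the optimal gain `K*_{n-d}` (1-based index `j = n − d`),
defined by the backward recursion `K*_n = f_1/τ` and, for `j = n−1,…,1`,
`K*_j = τ^{-(n+1−j)} ( f_{n+1−j} + ∑_{i=1}^{n−j} K*_{j+i} (−1)^{i+1} τ^{n−j+1−i} C(j−1+i, j−1) )`. -/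
noncomputable def KstarAux (n : ℕ) (τ l2 lN : ℝ) (d : ℕ) : ℝ :=
  Nat.strongRecOn d (fun d ih =>
    if d = 0 then fcoef n l2 lN 1 / τ
    else (1 / τ ^ (d + 1)) * (fcoef n l2 lN (d + 1) +
      ∑ i ∈ (Finset.Icc 1 d).attach,
        ih (d - i.1) (by have := Finset.mem_Icc.mp i.2; omega) * (-1 : ℝ) ^ (i.1 + 1) *
          τ ^ (d + 1 - i.1) * (Nat.choose (n - d - 1 + i.1) (n - d - 1) : ℝ)))

lemma KstarAux_unfold (n : ℕ) (τ l2 lN : ℝ) (d : ℕ) :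
    KstarAux n τ l2 lN d =
      if d = 0 then fcoef n l2 lN 1 / τ
      else (1 / τ ^ (d + 1)) * (fcoef n l2 lN (d + 1) +
        ∑ i ∈ (Finset.Icc 1 d).attach,
          KstarAux n τ l2 lN (d - i.1) * (-1 : ℝ) ^ (i.1 + 1) *
            τ ^ (d + 1 - i.1) * (Nat.choose (n - d - 1 + i.1) (n - d - 1) : ℝ)) := by
  unfold KstarAux
  rw [Nat.strongRecOn_eq]

lemma fcoef_sum (n : ℕ) (τ l2 lN : ℝ) (hτ : τ ≠ 0) (d : ℕ) :
    fcoef n l2 lN (d + 1) =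
      ∑ i ∈ Finset.range (d + 1), KstarAux n τ l2 lN (d - i) * (-1 : ℝ) ^ i *
        τ ^ (d + 1 - i) * (Nat.choose (n - d - 1 + i) (n - d - 1) : ℝ) := by
  have h := KstarAux_unfold n τ l2 lN d
  rcases Nat.eq_zero_or_pos d with rfl | hd
  · rw [if_pos rfl] at h
    simp [h, Nat.choose_self]
    field_simp
  · rw [if_neg (by omega)] at h
    have hP : τ ^ (d + 1) ≠ 0 := pow_ne_zero _ hτ
    have hS : (Finset.Icc 1 d).attach.sum (fun i =>
        KstarAux n τ l2 lN (d - i.1) * (-1 : ℝ) ^ (i.1 + 1) *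
          τ ^ (d + 1 - i.1) * (Nat.choose (n - d - 1 + i.1) (n - d - 1) : ℝ))
        = ∑ i ∈ Finset.Icc 1 d, KstarAux n τ l2 lN (d - i) * (-1 : ℝ) ^ (i + 1) *
          τ ^ (d + 1 - i) * (Nat.choose (n - d - 1 + i) (n - d - 1) : ℝ) :=
      Finset.sum_attach (Finset.Icc 1 d) (fun i => KstarAux n τ l2 lN (d - i) * (-1 : ℝ) ^ (i + 1) *
          τ ^ (d + 1 - i) * (Nat.choose (n - d - 1 + i) (n - d - 1) : ℝ))
    rw [hS] at h
    have hmain : fcoef n l2 lN (d + 1) = KstarAux n τ l2 lN d * τ ^ (d + 1)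
        - ∑ i ∈ Finset.Icc 1 d, KstarAux n τ l2 lN (d - i) * (-1 : ℝ) ^ (i + 1) *
          τ ^ (d + 1 - i) * (Nat.choose (n - d - 1 + i) (n - d - 1) : ℝ) := by
      field_simp at h
      linarith [h]
    rw [hmain]
    -- split range (d+1) at bottom
    rw [Finset.sum_range_succ']
    have hIcc : ∑ i ∈ Finset.Icc 1 d, KstarAux n τ l2 lN (d - i) * (-1 : ℝ) ^ (i + 1) *
          τ ^ (d + 1 - i) * (Nat.choose (n - d - 1 + i) (n - d - 1) : ℝ)
        = ∑ i ∈ Finset.range d, KstarAux n τ l2 lN (d - (1 + i)) * (-1 : ℝ) ^ ((1 + i) + 1) *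
          τ ^ (d + 1 - (1 + i)) * (Nat.choose (n - d - 1 + (1 + i)) (n - d - 1) : ℝ) := by
      rw [← Finset.Ico_add_one_right_eq_Icc, Finset.sum_Ico_eq_sum_range]
      norm_num
    rw [hIcc]
    have hT : ∑ k ∈ Finset.range d,
        KstarAux n τ l2 lN (d - (k + 1)) * (-1 : ℝ) ^ (k + 1) *
          τ ^ (d + 1 - (k + 1)) * (Nat.choose (n - d - 1 + (k + 1)) (n - d - 1) : ℝ)
        = -∑ i ∈ Finset.range d, KstarAux n τ l2 lN (d - (1 + i)) * (-1 : ℝ) ^ ((1 + i) + 1) *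
          τ ^ (d + 1 - (1 + i)) * (Nat.choose (n - d - 1 + (1 + i)) (n - d - 1) : ℝ) := by
      rw [← Finset.sum_neg_distrib]
      refine Finset.sum_congr rfl fun i hi => ?_
      rw [show 1 + i = i + 1 by omega, pow_succ]
      ring
    rw [hT]
    simp [Nat.choose_self]
    ring

section facts
variable {n N : ℕ}

lemma base_pos (hN : 1 < N) : 0 < ((N : ℝ) - 1) / ((N : ℝ) + 1) := by
  have h1 : (1 : ℝ) < N := by exact_mod_cast hN
  apply div_pos <;> linarith

lemma base_lt_one (hN : 1 < N) : ((N : ℝ) - 1) / ((N : ℝ) + 1) < 1 := by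
  have h1 : (1 : ℝ) < N := by exact_mod_cast hN
  rw [div_lt_one (by linarith)]; linarith

lemma rstar_pos (hN : 1 < N) : 0 < rstar n 1 N := by
  unfold rstar
  exact Real.rpow_pos_of_pos (base_pos hN) _

lemma rstar_lt_one (hn : 1 ≤ n) (hN : 1 < N) : rstar n 1 N < 1 := by
  unfold rstar
  exact Real.rpow_lt_one (base_pos hN).le (base_lt_one hN)
    (by positivity)

lemma rstar_pow (hn : 1 ≤ n) (hN : 1 < N) :
    (rstar n 1 N) ^ n = ((N : ℝ) - 1) / ((N : ℝ) + 1) := by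
  unfold rstar
  rw [← Real.rpow_natCast ((((N:ℝ) - 1)/((N:ℝ)+1)) ^ ((1:ℝ)/n)) n,
    ← Real.rpow_mul (base_pos hN).le, one_div, inv_mul_cancel₀ (by positivity), Real.rpow_one]

lemma fcoef_eq (hn : 1 ≤ n) (hN : 1 < N) {q : ℕ} (h1 : 1 ≤ q) (h2 : q ≤ n) :
    fcoef n 1 N q = (-1 : ℝ) ^ q * (Nat.choose n q) * (((N : ℝ) + 1) / (2 * N)) *
      (((rstar n 1 N) ^ 2) ^ q - 1) := by
  have hR : 0 < rstar n 1 (N:ℝ) := rstar_pos hN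
  have hRn := rstar_pow hn hN
  have hN1 : (1 : ℝ) < N := by exact_mod_cast hN
  have hrw : (rstar n 1 N : ℝ) ^ (2 * (q : ℝ) - (n : ℝ))
      = (rstar n 1 N) ^ (2 * q) / ((rstar n 1 N) ^ n) := by
    rw [Real.rpow_sub hR, show (2 : ℝ) * q = ((2 * q : ℕ) : ℝ) by push_cast; ring,
      Real.rpow_natCast, Real.rpow_natCast]
  unfold fcoef
  rw [hrw, hRn, Nat.choose_symm h2, ← pow_mul]
  have hne : ((N : ℝ) - 1) ≠ 0 := by linarith
  have hne2 : ((N : ℝ) + 1) ≠ 0 := by linarith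
  field_simp

end facts

lemma binom_aux (m : ℕ) (z : ℂ) :
    ∑ j ∈ Finset.range (m + 1), (-1 : ℂ) ^ j * (Nat.choose m (m - j)) * z ^ (m - j)
      = (z - 1) ^ m := by
  rw [← Finset.sum_range_reflect, sub_pow]
  refine Finset.sum_congr rfl fun j hj => ?_
  rw [Finset.mem_range] at hj
  have h1 : m + 1 - 1 - j = m - j := by omega
  have h2 : m - (m - j) = j := by omega
  rw [h1, h2]
  have h3 : (-1 : ℂ) ^ (m - j) = (-1) ^ (j + m) := by
    rw [show j + m = (m - j) + 2 * j by omega, pow_add, pow_mul]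
    norm_num
  rw [h3, one_pow]
  ring

lemma key_sum (n : ℕ) (hn : 1 ≤ n) (τ : ℝ) (hτ : τ ≠ 0) (N : ℕ) (z : ℂ) :
    ∑ e ∈ Finset.range n, (KstarAux n τ 1 N e : ℂ) * (τ : ℂ) ^ (e + 1) * (z - 1) ^ (n - 1 - e)
      = ∑ q ∈ Finset.range n, ((fcoef n 1 N (q + 1) : ℝ) : ℂ) * z ^ (n - 1 - q) := by
  have hf : ∀ d ∈ Finset.range n, ((fcoef n 1 (N : ℝ) (d + 1) : ℝ) : ℂ) * z ^ (n - 1 - d)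
      = ∑ e ∈ Finset.range (d + 1), (KstarAux n τ 1 N e : ℂ) * (-1 : ℂ) ^ (d - e) *
          (τ : ℂ) ^ (e + 1) * (Nat.choose (n - 1 - e) (n - 1 - d) : ℂ) * z ^ (n - 1 - d) := by
    intro d hd
    rw [Finset.mem_range] at hd
    have hfs := fcoef_sum n τ 1 N hτ d
    have hcast : ((fcoef n 1 (N : ℝ) (d + 1) : ℝ) : ℂ)
        = ∑ i ∈ Finset.range (d + 1), (KstarAux n τ 1 N (d - i) : ℂ) * (-1 : ℂ) ^ i *
            (τ : ℂ) ^ (d + 1 - i) * (Nat.choose (n - d - 1 + i) (n - d - 1) : ℂ) := by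
      rw [hfs]; push_cast; ring
    rw [hcast, Finset.sum_mul, ← Finset.sum_range_reflect]
    refine Finset.sum_congr rfl fun i hi => ?_
    rw [Finset.mem_range] at hi
    have e1 : d + 1 - 1 - i = d - i := by omega
    have e2 : d - (d - i) = i := by omega
    have e3 : d + 1 - (d - i) = i + 1 := by omega
    have e4 : n - d - 1 + (d - i) = n - 1 - i := by omega
    have e5 : n - d - 1 = n - 1 - d := by omega
    rw [e1, e2, e3, e4, e5]
  rw [Finset.sum_congr rfl hf]
  have hswap : ∑ d ∈ Finset.range n, ∑ e ∈ Finset.range (d + 1),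
        (KstarAux n τ 1 N e : ℂ) * (-1 : ℂ) ^ (d - e) *
          (τ : ℂ) ^ (e + 1) * (Nat.choose (n - 1 - e) (n - 1 - d) : ℂ) * z ^ (n - 1 - d)
      = ∑ e ∈ Finset.range n, ∑ d ∈ Finset.Ico e n,
        (KstarAux n τ 1 N e : ℂ) * (-1 : ℂ) ^ (d - e) *
          (τ : ℂ) ^ (e + 1) * (Nat.choose (n - 1 - e) (n - 1 - d) : ℂ) * z ^ (n - 1 - d) := by
    refine Finset.sum_comm' ?_
    intro x y
    simp only [Finset.mem_range, Finset.mem_Ico]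
    omega
  rw [hswap]
  refine (Finset.sum_congr rfl fun e he => ?_).symm
  rw [Finset.mem_range] at he
  have hfac : ∀ d ∈ Finset.Ico e n,
      (KstarAux n τ 1 N e : ℂ) * (-1 : ℂ) ^ (d - e) *
        (τ : ℂ) ^ (e + 1) * (Nat.choose (n - 1 - e) (n - 1 - d) : ℂ) * z ^ (n - 1 - d)
      = ((KstarAux n τ 1 N e : ℂ) * (τ : ℂ) ^ (e + 1)) *
        ((-1 : ℂ) ^ (d - e) * (Nat.choose (n - 1 - e) ((n - 1 - e) - (d - e)) : ℂ) *
          z ^ ((n - 1 - e) - (d - e))) := by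
    intro d hd
    rw [Finset.mem_Ico] at hd
    have e6 : n - 1 - e - (d - e) = n - 1 - d := by omega
    rw [e6]
    ring
  rw [Finset.sum_congr rfl hfac, ← Finset.mul_sum, Finset.sum_Ico_eq_sum_range]
  have e7 : n - e = (n - 1 - e) + 1 := by omega
  rw [e7]
  have hbin : ∑ j ∈ Finset.range ((n - 1 - e) + 1),
      (-1 : ℂ) ^ (e + j - e) * (Nat.choose (n - 1 - e) ((n - 1 - e) - (e + j - e)) : ℂ) *
        z ^ ((n - 1 - e) - (e + j - e))
      = (z - 1) ^ (n - 1 - e) := by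
    rw [← binom_aux (n - 1 - e) z]
    refine Finset.sum_congr rfl fun j hj => ?_
    have e8 : e + j - e = j := by omega
    rw [e8]
  rw [hbin]

lemma fsum_closed (n : ℕ) (hn : 1 ≤ n) (N : ℕ) (hN : 1 < N) (z : ℂ) :
    ∑ q ∈ Finset.range n, ((fcoef n 1 (N : ℝ) (q + 1) : ℝ) : ℂ) * z ^ (n - 1 - q)
      = (((N : ℂ) + 1) / (2 * N)) *
        ((z - (((rstar n 1 (N : ℝ)) ^ 2 : ℝ) : ℂ)) ^ n - (z - 1) ^ n) := by
  set s : ℂ := (((rstar n 1 (N : ℝ)) ^ 2 : ℝ) : ℂ) with hs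
  rw [sub_pow z s n, sub_pow z 1 n, ← Finset.sum_sub_distrib]
  rw [Finset.sum_range_succ]
  have htop : (-1 : ℂ) ^ (n + n) * z ^ n * s ^ (n - n) * (Nat.choose n n : ℂ)
      - (-1 : ℂ) ^ (n + n) * z ^ n * 1 ^ (n - n) * (Nat.choose n n : ℂ) = 0 := by
    simp
  rw [htop, add_zero, Finset.mul_sum]
  conv_rhs => rw [← Finset.sum_range_reflect]
  refine Finset.sum_congr rfl fun q hq => ?_
  rw [Finset.mem_range] at hq
  have e1 : (n - 1 - q) + n = (q + 1) + 2 * (n - 1 - q) := by omega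
  have e2 : n - (n - 1 - q) = q + 1 := by omega
  have e3 : Nat.choose n (n - 1 - q) = Nat.choose n (q + 1) := by
    rw [show n - 1 - q = n - (q + 1) by omega, Nat.choose_symm (by omega)]
  rw [e2, e3]
  have hfc : ((fcoef n 1 (N : ℝ) (q + 1) : ℝ) : ℂ)
      = (-1 : ℂ) ^ (q + 1) * (Nat.choose n (q + 1) : ℂ) * (((N : ℂ) + 1) / (2 * N)) *
        (s ^ (q + 1) - 1) := by
    rw [fcoef_eq hn hN (by omega) (by omega), hs]
    push_cast
    ring
  have e6 : (-1 : ℂ) ^ ((q + 1) + 2 * (n - 1 - q)) = (-1) ^ (q + 1) := by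
    rw [pow_add, pow_mul]
    norm_num
  rw [hfc, e1, e6, one_pow]
  ring

lemma mem_spec_iff {n : ℕ} (M : Matrix (Fin n) (Fin n) ℂ) (z : ℂ) :
    z ∈ spectrum ℂ M ↔ ∃ v, v ≠ 0 ∧ M.mulVec v = z • v := by
  rw [spectrum.mem_iff, Matrix.isUnit_iff_isUnit_det, isUnit_iff_ne_zero, not_ne_iff,
    ← Matrix.exists_mulVec_eq_zero_iff]
  constructor
  · rintro ⟨v, hv, h⟩
    refine ⟨v, hv, ?_⟩
    rw [Matrix.sub_mulVec, Algebra.algebraMap_eq_smul_one, Matrix.smul_mulVec,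
      Matrix.one_mulVec, sub_eq_zero] at h
    exact h.symm
  · rintro ⟨v, hv, h⟩
    refine ⟨v, hv, ?_⟩
    rw [Matrix.sub_mulVec, Algebra.algebraMap_eq_smul_one, Matrix.smul_mulVec,
      Matrix.one_mulVec, sub_eq_zero, h]

lemma spec_nonempty {n : ℕ} (hn : 1 ≤ n) (M : Matrix (Fin n) (Fin n) ℂ) :
    (spectrum ℂ M).Nonempty := by
  haveI : Nonempty (Fin n) := ⟨⟨0, hn⟩⟩
  obtain ⟨c, hc⟩ := Module.End.exists_eigenvalue (Matrix.toLin' M)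
  obtain ⟨v, hv⟩ := hc.exists_hasEigenvector
  refine ⟨c, (mem_spec_iff M c).2 ⟨v, hv.right, ?_⟩⟩
  rw [← Matrix.toLin'_apply]
  exact hv.apply_eq_smul

lemma abs_of_eq {n N : ℕ} (hn : 1 ≤ n) (hN : 1 < N) (z : ℂ)
    (h : ((N : ℝ) + 1) * ‖z - (((rstar n 1 (N : ℝ)) ^ 2 : ℝ) : ℂ)‖ ^ n
        = ((N : ℝ) - 1) * ‖z - 1‖ ^ n) :
    ‖z‖ = rstar n 1 (N : ℝ) := by
  set R := rstar n 1 (N : ℝ) with hRdef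
  have hR : 0 < R := rstar_pos hN
  have hR1 : R < 1 := rstar_lt_one hn hN
  have hRn : R ^ n = ((N : ℝ) - 1) / ((N : ℝ) + 1) := rstar_pow hn hN
  have hN1 : (1 : ℝ) < N := by exact_mod_cast hN
  have key : ‖z - ((R ^ 2 : ℝ) : ℂ)‖ = R * ‖z - 1‖ := by
    refine (pow_left_inj₀ (n := n) (by positivity) (by positivity) (by omega)).1 ?_
    rw [mul_pow, hRn, div_mul_eq_mul_div, eq_div_iff (by linarith)]
    linarith [h]
  have h2 : Complex.normSq (z - ((R ^ 2 : ℝ) : ℂ)) = R ^ 2 * Complex.normSq (z - 1) := by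
    have := congrArg (· ^ 2) key
    simpa [Complex.sq_norm, mul_pow] using this
  have h2' : (z.re - R ^ 2) ^ 2 + z.im ^ 2 = R ^ 2 * ((z.re - 1) ^ 2 + z.im ^ 2) := by
    simpa [Complex.normSq_apply, Complex.sub_re, Complex.sub_im, Complex.ofReal_re,
      Complex.ofReal_im, sq] using h2
  have hfac : (1 - R ^ 2) * (z.re ^ 2 + z.im ^ 2 - R ^ 2) = 0 := by linear_combination h2'
  have hsq : z.re ^ 2 + z.im ^ 2 = R ^ 2 := by
    have hne : (1 - R ^ 2) ≠ 0 := by nlinarith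
    have := mul_eq_zero.1 hfac
    rcases this with h' | h'
    · exact absurd h' hne
    · linarith
  have habs : ‖z‖ ^ 2 = R ^ 2 := by
    rw [Complex.sq_norm, Complex.normSq_apply]
    simpa [sq] using hsq
  exact (pow_left_inj₀ (by positivity) hR.le (by norm_num)).1 habs

lemma eig_poly (n : ℕ) (hn : 1 ≤ n) (τ : ℝ) (hτ : 0 < τ) (N : ℕ) (lam : ℝ) (z : ℂ)
    (hz : z ∈ spectrum ℂ ((Hmat n τ lam (Matrix.of fun _ m =>
        KstarAux n τ 1 (N : ℝ) (n - 1 - (m : ℕ)))).map (Complex.ofReal ·))) :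
    (z - 1) ^ n + (lam : ℂ) * ∑ e ∈ Finset.range n,
        (KstarAux n τ 1 (N : ℝ) e : ℂ) * (τ : ℂ) ^ (e + 1) * (z - 1) ^ (n - 1 - e) = 0 := by
  set M := ((Hmat n τ lam (Matrix.of fun _ m =>
      KstarAux n τ 1 (N : ℝ) (n - 1 - (m : ℕ)))).map (Complex.ofReal ·)) with hM
  obtain ⟨v, hv0, hMv⟩ := (mem_spec_iff M z).1 hz
  have hτC : (τ : ℂ) ≠ 0 := Complex.ofReal_ne_zero.2 hτ.ne'
  set w : ℂ := (z - 1) / (τ : ℂ) with hw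
  have hent : ∀ i j : Fin n, M i j
      = (if (j : ℕ) = (i : ℕ) then 1 else if (j : ℕ) = (i : ℕ) + 1 then (τ : ℂ) else 0)
        - (if (i : ℕ) = n - 1 then
            (lam : ℂ) * (τ : ℂ) * (KstarAux n τ 1 (N : ℝ) (n - 1 - (j : ℕ)) : ℂ) else 0) := by
    intro i j
    have hreal : (Hmat n τ lam (Matrix.of fun _ m =>
        KstarAux n τ 1 (N : ℝ) (n - 1 - (m : ℕ)))) i j
        = (if (j : ℕ) = (i : ℕ) then 1 else if (j : ℕ) = (i : ℕ) + 1 then τ else 0)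
          - (if (i : ℕ) = n - 1 then
              lam * τ * (KstarAux n τ 1 (N : ℝ) (n - 1 - (j : ℕ))) else 0) := by
      simp only [Hmat, Matrix.sub_apply, Matrix.smul_apply, Amat, Bmat, Matrix.of_apply,
        Matrix.mul_apply, Fin.sum_univ_one, smul_eq_mul]
      split_ifs <;> ring
    rw [hM, Matrix.map_apply, hreal]
    push_cast [apply_ite Complex.ofReal]
    norm_num
  have hrow : ∀ i : Fin n, ∑ j, M i j * v j = z * v i := by
    intro i
    have := congrFun hMv i
    simpa [Matrix.mulVec, dotProduct, Pi.smul_apply, smul_eq_mul] using this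
  have hstep : ∀ m : ℕ, ∀ h : m + 1 < n, v ⟨m + 1, h⟩ = w * v ⟨m, by omega⟩ := by
    intro m h
    have hr := hrow ⟨m, by omega⟩
    have hsum : ∀ j : Fin n, M ⟨m, by omega⟩ j * v j
        = (if j = (⟨m, by omega⟩ : Fin n) then v j else 0)
          + (if j = (⟨m + 1, h⟩ : Fin n) then (τ : ℂ) * v j else 0) := by
      intro j
      rw [hent]
      simp only [Fin.ext_iff, Fin.val_mk]
      have hmne : ¬ ((m : ℕ) = n - 1) := by omega
      rw [if_neg hmne, sub_zero]
      split_ifs <;> (first | ring1 | (exfalso; omega))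
    rw [Finset.sum_congr rfl (fun j _ => hsum j), Finset.sum_add_distrib,
      Finset.sum_ite_eq', Finset.sum_ite_eq'] at hr
    simp only [Finset.mem_univ, if_true] at hr
    rw [hw]
    field_simp
    linear_combination hr
  have hval : ∀ m : ℕ, ∀ h : m < n, v ⟨m, h⟩ = w ^ m * v ⟨0, by omega⟩ := by
    intro m
    induction m with
    | zero => intro h; simp
    | succ k ih =>
      intro h
      rw [hstep k h, ih (by omega)]
      ring
  have hvz : v ⟨0, by omega⟩ ≠ 0 := by
    intro h0
    apply hv0
    funext j
    have := hval j.1 j.2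
    rw [h0, mul_zero] at this
    simpa [Fin.eta] using this
  -- last row
  have hr := hrow ⟨n - 1, by omega⟩
  have hsum : ∀ j : Fin n, M ⟨n - 1, by omega⟩ j * v j
      = (if j = (⟨n - 1, by omega⟩ : Fin n) then v j else 0)
        - (lam : ℂ) * (τ : ℂ) * (KstarAux n τ 1 (N : ℝ) (n - 1 - (j : ℕ)) : ℂ) * v j := by
    intro j
    rw [hent]
    simp only [Fin.ext_iff, Fin.val_mk, if_true]
    have hj2 : ¬ ((j : ℕ) = (n - 1) + 1) := by omega
    rw [if_neg hj2]
    split_ifs <;> ring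
  rw [Finset.sum_congr rfl (fun j _ => hsum j), Finset.sum_sub_distrib,
    Finset.sum_ite_eq'] at hr
  simp only [Finset.mem_univ, if_true] at hr
  -- rewrite v in terms of w powers
  have hvrw : ∀ j : Fin n, (lam : ℂ) * (τ : ℂ) * (KstarAux n τ 1 (N : ℝ) (n - 1 - (j : ℕ)) : ℂ) * v j
      = (lam : ℂ) * (τ : ℂ) * ((KstarAux n τ 1 (N : ℝ) (n - 1 - (j : ℕ)) : ℂ) * w ^ (j : ℕ) * v ⟨0, by omega⟩) := by
    intro j
    rw [show v j = v ⟨(j : ℕ), j.2⟩ by rw [Fin.eta], hval j.1 j.2]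
    ring
  rw [Finset.sum_congr rfl (fun j _ => hvrw j), ← Finset.mul_sum] at hr
  rw [Fin.sum_univ_eq_sum_range (fun j => (KstarAux n τ 1 (N : ℝ) (n - 1 - j) : ℂ) * w ^ j * v ⟨0, by omega⟩)] at hr
  rw [← Finset.sum_range_reflect] at hr
  have hrefl : ∀ j ∈ Finset.range n,
      (KstarAux n τ 1 (N : ℝ) (n - 1 - (n - 1 - j)) : ℂ) * w ^ (n - 1 - j) * v ⟨0, by omega⟩
      = (KstarAux n τ 1 (N : ℝ) j : ℂ) * w ^ (n - 1 - j) * v ⟨0, by omega⟩ := by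
    intro j hj
    rw [Finset.mem_range] at hj
    rw [show n - 1 - (n - 1 - j) = j by omega]
  rw [Finset.sum_congr rfl hrefl] at hr
  rw [hval (n - 1) (by omega)] at hr
  -- hr : w^(n-1) * v0 - lam * τ * (∑ ...) = z * (w^(n-1) * v0)
  set S : ℂ := ∑ j ∈ Finset.range n, (KstarAux n τ 1 (N : ℝ) j : ℂ) * w ^ (n - 1 - j) with hS
  have hSold : ∑ j ∈ Finset.range n,
      (KstarAux n τ 1 (N : ℝ) j : ℂ) * w ^ (n - 1 - j) * v ⟨0, by omega⟩ = S * v ⟨0, by omega⟩ := by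
    rw [hS, Finset.sum_mul]
  rw [hSold] at hr
  have hzw : z - 1 = (τ : ℂ) * w := by
    rw [hw]; field_simp
  have hfac : (w ^ (n - 1) * (1 - z) - (lam : ℂ) * (τ : ℂ) * S) * v ⟨0, by omega⟩ = 0 := by
    linear_combination hr
  have h0 : w ^ (n - 1) * (1 - z) - (lam : ℂ) * (τ : ℂ) * S = 0 :=
    (mul_eq_zero.1 hfac).resolve_right hvz
  have hzw' : 1 - z = -((τ : ℂ) * w) := by linear_combination -hzw
  rw [hzw'] at h0
  have hwn : w ^ (n - 1) * w = w ^ n := by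
    rw [← pow_succ, show n - 1 + 1 = n by omega]
  have h1 : (τ : ℂ) * (w ^ n + (lam : ℂ) * S) = 0 := by
    rw [← hwn]; linear_combination -h0
  have hkey : w ^ n + (lam : ℂ) * S = 0 := (mul_eq_zero.1 h1).resolve_left hτC
  have hterm : ∀ e ∈ Finset.range n,
      (KstarAux n τ 1 (N : ℝ) e : ℂ) * (τ : ℂ) ^ (e + 1) * (z - 1) ^ (n - 1 - e)
      = (τ : ℂ) ^ n * ((KstarAux n τ 1 (N : ℝ) e : ℂ) * w ^ (n - 1 - e)) := by
    intro e he
    rw [Finset.mem_range] at he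
    have hpow : (τ : ℂ) ^ (e + 1) * (τ : ℂ) ^ (n - 1 - e) = (τ : ℂ) ^ n := by
      rw [← pow_add, show e + 1 + (n - 1 - e) = n by omega]
    rw [hzw, mul_pow, ← hpow]
    ring
  rw [Finset.sum_congr rfl hterm, ← Finset.mul_sum, ← hS, hzw, mul_pow]
  linear_combination ((τ : ℂ) ^ n) * hkey

/-- for the star graph (nonzero Laplacian eigenvalues `λ₂ = 1`, `λ_N = N > 1`),
with `r* = ((N−1)/(N+1))^{1/n}` and `K*` given by the recursion of Theorem 2, every complex
eigenvalue of `H(1,K*)` and of `H(N,K*)` has modulus exactly `r*`; in particular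
`max(ρ(H(1,K*)), ρ(H(N,K*))) = r*`, so the lower bound on the convergence rate is attained. -/
theorem stmt_10 (n : ℕ) (hn : 1 ≤ n) (τ : ℝ) (hτ : 0 < τ) (N : ℕ) (hN : 1 < N) :
    (∀ z ∈ spectrum ℂ
        ((Hmat n τ 1 (Matrix.of fun _ m =>
            KstarAux n τ 1 (N : ℝ) (n - 1 - (m : ℕ)))).map (Complex.ofReal ·)),
      ‖z‖ = rstar n 1 (N : ℝ))
    ∧ (∀ z ∈ spectrum ℂ
        ((Hmat n τ (N : ℝ) (Matrix.of fun _ m =>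
            KstarAux n τ 1 (N : ℝ) (n - 1 - (m : ℕ)))).map (Complex.ofReal ·)),
      ‖z‖ = rstar n 1 (N : ℝ))
    ∧ max
        (specRad (Hmat n τ 1 (Matrix.of fun _ m => KstarAux n τ 1 (N : ℝ) (n - 1 - (m : ℕ)))))
        (specRad (Hmat n τ (N : ℝ) (Matrix.of fun _ m => KstarAux n τ 1 (N : ℝ) (n - 1 - (m : ℕ)))))
      = rstar n 1 (N : ℝ) := by
  have hN1 : (1 : ℝ) < N := by exact_mod_cast hN
  have hNC : ((N : ℂ)) ≠ 0 := by
    simp only [Ne, Nat.cast_eq_zero]; omega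
  have hpos1 : (0 : ℝ) < (N : ℝ) + 1 := by linarith
  have hpos2 : (0 : ℝ) < (N : ℝ) - 1 := by linarith
  have e1 : ((N : ℂ) + 1) = (((N : ℝ) + 1 : ℝ) : ℂ) := by push_cast; ring
  have e2 : ((N : ℂ) - 1) = (((N : ℝ) - 1 : ℝ) : ℂ) := by push_cast; ring
  have e3 : ((rstar n 1 (N : ℝ) : ℝ) : ℂ) ^ 2 = (((rstar n 1 (N : ℝ)) ^ 2 : ℝ) : ℂ) := by
    push_cast; ring
  have part1 : ∀ z ∈ spectrum ℂ
      ((Hmat n τ 1 (Matrix.of fun _ m =>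
          KstarAux n τ 1 (N : ℝ) (n - 1 - (m : ℕ)))).map (Complex.ofReal ·)),
      ‖z‖ = rstar n 1 (N : ℝ) := by
    intro z hz
    have h0 := eig_poly n hn τ hτ N 1 z hz
    rw [key_sum n hn τ hτ.ne' N z, fsum_closed n hn N hN z] at h0
    push_cast at h0
    field_simp at h0
    have hpoly : (((N : ℂ)) + 1) * (z - ((rstar n 1 (N : ℝ) : ℝ) : ℂ) ^ 2) ^ n
        = -((((N : ℂ)) - 1) * (z - 1) ^ n) := by
      linear_combination h0
    rw [e1, e2, e3] at hpoly
    have habs := congrArg (‖·‖) hpoly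
    rw [norm_mul, norm_pow, Complex.norm_real, Real.norm_eq_abs, abs_of_pos hpos1,
      norm_neg, norm_mul, norm_pow, Complex.norm_real, Real.norm_eq_abs,
      abs_of_pos hpos2] at habs
    exact abs_of_eq hn hN z habs
  have part2 : ∀ z ∈ spectrum ℂ
      ((Hmat n τ (N : ℝ) (Matrix.of fun _ m =>
          KstarAux n τ 1 (N : ℝ) (n - 1 - (m : ℕ)))).map (Complex.ofReal ·)),
      ‖z‖ = rstar n 1 (N : ℝ) := by
    intro z hz
    have h0 := eig_poly n hn τ hτ N (N : ℝ) z hz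
    rw [key_sum n hn τ hτ.ne' N z, fsum_closed n hn N hN z] at h0
    push_cast at h0
    field_simp at h0
    have hpoly' : (N : ℂ) * ((((N : ℂ)) + 1) * (z - ((rstar n 1 (N : ℝ) : ℝ) : ℂ) ^ 2) ^ n)
        = (N : ℂ) * ((((N : ℂ)) - 1) * (z - 1) ^ n) := by
      linear_combination (N : ℂ) * h0
    have hpoly := mul_left_cancel₀ hNC hpoly'
    rw [e1, e2, e3] at hpoly
    have habs := congrArg (‖·‖) hpoly
    rw [norm_mul, norm_pow, Complex.norm_real, Real.norm_eq_abs, abs_of_pos hpos1,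
      norm_mul, norm_pow, Complex.norm_real, Real.norm_eq_abs, abs_of_pos hpos2] at habs
    exact abs_of_eq hn hN z habs
  refine ⟨part1, part2, ?_⟩
  have himg1 : (fun z : ℂ => ‖z‖) '' spectrum ℂ
      ((Hmat n τ 1 (Matrix.of fun _ m =>
          KstarAux n τ 1 (N : ℝ) (n - 1 - (m : ℕ)))).map (Complex.ofReal ·))
      = {rstar n 1 (N : ℝ)} := by
    apply Set.eq_singleton_iff_nonempty_unique_mem.2
    refine ⟨(spec_nonempty hn _).image _, ?_⟩
    rintro _ ⟨z, hz, rfl⟩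
    exact part1 z hz
  have himg2 : (fun z : ℂ => ‖z‖) '' spectrum ℂ
      ((Hmat n τ (N : ℝ) (Matrix.of fun _ m =>
          KstarAux n τ 1 (N : ℝ) (n - 1 - (m : ℕ)))).map (Complex.ofReal ·))
      = {rstar n 1 (N : ℝ)} := by
    apply Set.eq_singleton_iff_nonempty_unique_mem.2
    refine ⟨(spec_nonempty hn _).image _, ?_⟩
    rintro _ ⟨z, hz, rfl⟩
    exact part2 z hz
  unfold specRad
  rw [himg1, himg2, csSup_singleton, max_self]
end

section
/- Let n ≥ 1, τ > 0, and let A, B, H(λ,K) be as in the context. Let λ ≠ 0 be a real number and define the row vector K(λ) by K(λ)_m = C(n, m−1)/(λ τ^{n−m+1}) for m = 1,…,n. Then det(zI_n − H(λ,K(λ))) = z^n for all z ∈ ℂ, and consequently the matrix H(λ,K(λ)) = A − λBK(λ) is nilpotent: (A − λBK(λ))^n = 0. -/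
open Matrix

/-- The deadbeat gain `K(λ)` with 1-based entries `K(λ)_m = C(n, m−1)/(λ τ^{n−m+1})`
(so the 0-based entry at `m : Fin n` is `C(n, m)/(λ τ^{n−m})`). -/
noncomputable def Kdeadbeat (n : ℕ) (τ lam : ℝ) : Matrix (Fin 1) (Fin n) ℝ :=
  Matrix.of fun _ m => (Nat.choose n (m : ℕ) : ℝ) / (lam * τ ^ (n - (m : ℕ)))

/-- Similarity transform matrix: `Q k j = τ^j * C(k, j)`, lower triangular. -/
noncomputable def Qmat (n : ℕ) (τ : ℝ) : Matrix (Fin n) (Fin n) ℝ :=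
  Matrix.of fun k j => τ ^ (j : ℕ) * (Nat.choose (k : ℕ) (j : ℕ) : ℝ)

/-- The nilpotent upper shift. -/
noncomputable def Jmat (n : ℕ) : Matrix (Fin n) (Fin n) ℝ :=
  Matrix.of fun k j => if (j : ℕ) = (k : ℕ) + 1 then 1 else 0

lemma Hmat_entry (n : ℕ) (hn : 1 ≤ n) (τ : ℝ) (lam : ℝ) (hlam : lam ≠ 0)
    (l j : Fin n) :
    Hmat n τ lam (Kdeadbeat n τ lam) l j =
      (if (j : ℕ) = (l : ℕ) then 1 else 0) + (if (j : ℕ) = (l : ℕ) + 1 then τ else 0)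
        - (if (l : ℕ) = n - 1 then τ * ((Nat.choose n (j : ℕ) : ℝ) / τ ^ (n - (j : ℕ)))
            else 0) := by
  simp only [Hmat, Amat, Bmat, Kdeadbeat, Matrix.sub_apply, Matrix.smul_apply,
    Matrix.mul_apply, Matrix.of_apply, Finset.univ_unique, Finset.sum_singleton,
    smul_eq_mul]
  congr 1
  · by_cases h1 : (j : ℕ) = (l : ℕ)
    · have h2 : ¬ ((j : ℕ) = (l : ℕ) + 1) := by omega
      simp [h1, h2]
    · simp [h1]
  · by_cases h : (l : ℕ) = n - 1
    · simp only [h, if_true]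
      rw [show lam * (τ * ((Nat.choose n (j : ℕ) : ℝ) / (lam * τ ^ (n - (j : ℕ))))) =
          τ * ((lam * (Nat.choose n (j : ℕ) : ℝ)) / (lam * τ ^ (n - (j : ℕ)))) by ring,
        mul_div_mul_left _ _ hlam]
    · simp [h]

lemma QH_eq_JQ (n : ℕ) (hn : 1 ≤ n) (τ : ℝ) (hτ : τ ≠ 0) (lam : ℝ) (hlam : lam ≠ 0) :
    Qmat n τ * Hmat n τ lam (Kdeadbeat n τ lam) = Jmat n * Qmat n τ := by
  ext k j
  rw [Matrix.mul_apply, Matrix.mul_apply]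
  -- Right-hand side value
  have hRHS : ∑ l, Jmat n k l * Qmat n τ l j =
      if h : (k : ℕ) + 1 < n then Qmat n τ ⟨(k : ℕ) + 1, h⟩ j else 0 := by
    split_ifs with h
    · rw [Finset.sum_eq_single (⟨(k : ℕ) + 1, h⟩ : Fin n)]
      · simp [Jmat]
      · intro b _ hb
        have : ¬ ((b : ℕ) = (k : ℕ) + 1) := by
          intro hb'; apply hb; exact Fin.ext hb'
        simp [Jmat, this]
      · simp
    · apply Finset.sum_eq_zero
      intro l _
      have : ¬ ((l : ℕ) = (k : ℕ) + 1) := by have := l.isLt; omega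
      simp [Jmat, this]
  rw [hRHS]
  -- Left-hand side: expand H entries and split the sum into three pieces
  have hsplit : ∑ l, Qmat n τ k l * Hmat n τ lam (Kdeadbeat n τ lam) l j =
      (∑ l, Qmat n τ k l * (if (j : ℕ) = (l : ℕ) then 1 else 0))
      + (∑ l, Qmat n τ k l * (if (j : ℕ) = (l : ℕ) + 1 then τ else 0))
      - (∑ l, Qmat n τ k l *
          (if (l : ℕ) = n - 1 then τ * ((Nat.choose n (j : ℕ) : ℝ) / τ ^ (n - (j : ℕ)))
            else 0)) := by
    rw [← Finset.sum_add_distrib, ← Finset.sum_sub_distrib]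
    apply Finset.sum_congr rfl
    intro l _
    rw [Hmat_entry n hn τ lam hlam l j]
    ring
  rw [hsplit]
  -- Evaluate the three sums
  have hS1 : (∑ l, Qmat n τ k l * (if (j : ℕ) = (l : ℕ) then 1 else 0)) =
      τ ^ (j : ℕ) * (Nat.choose (k : ℕ) (j : ℕ) : ℝ) := by
    rw [Finset.sum_eq_single j]
    · simp [Qmat]
    · intro b _ hb
      have : ¬ ((j : ℕ) = (b : ℕ)) := fun h => hb (Fin.ext h.symm)
      simp [this]
    · simp
  have hS3 : (∑ l, Qmat n τ k l *
      (if (l : ℕ) = n - 1 then τ * ((Nat.choose n (j : ℕ) : ℝ) / τ ^ (n - (j : ℕ)))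
        else 0)) =
      τ ^ (n - 1) * (Nat.choose (k : ℕ) (n - 1) : ℝ) *
        (τ * ((Nat.choose n (j : ℕ) : ℝ) / τ ^ (n - (j : ℕ)))) := by
    rw [Finset.sum_eq_single (⟨n - 1, by omega⟩ : Fin n)]
    · simp [Qmat]
    · intro b _ hb
      have : ¬ ((b : ℕ) = n - 1) := fun h => hb (Fin.ext h)
      simp [this]
    · simp
  rw [hS1, hS3]
  -- The `τ^{n-1} * τ / τ^{n-j}` factor equals `τ^j`
  have hj : (j : ℕ) < n := j.isLt
  have hk : (k : ℕ) < n := k.isLt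
  have hpow : τ ^ (n - 1) * (Nat.choose (k : ℕ) (n - 1) : ℝ) *
        (τ * ((Nat.choose n (j : ℕ) : ℝ) / τ ^ (n - (j : ℕ)))) =
      τ ^ (j : ℕ) * ((Nat.choose (k : ℕ) (n - 1) : ℝ) * (Nat.choose n (j : ℕ) : ℝ)) := by
    have h1 : τ ^ (n - 1) * τ = τ ^ (n - (j : ℕ)) * τ ^ (j : ℕ) := by
      rw [← pow_succ, ← pow_add]
      congr 1
      omega
    have hne : τ ^ (n - (j : ℕ)) ≠ 0 := pow_ne_zero _ hτ
    calc τ ^ (n - 1) * (Nat.choose (k : ℕ) (n - 1) : ℝ) *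
          (τ * ((Nat.choose n (j : ℕ) : ℝ) / τ ^ (n - (j : ℕ))))
        = (τ ^ (n - 1) * τ) * ((Nat.choose (k : ℕ) (n - 1) : ℝ) *
            (Nat.choose n (j : ℕ) : ℝ)) / τ ^ (n - (j : ℕ)) := by ring
      _ = _ := by rw [h1, div_eq_iff hne]; ring
  rw [hpow]
  -- Evaluate S2, by cases on whether j = 0
  by_cases hj0 : (j : ℕ) = 0
  · have hS2 : (∑ l, Qmat n τ k l * (if (j : ℕ) = (l : ℕ) + 1 then τ else 0)) = 0 := by
      apply Finset.sum_eq_zero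
      intro l _
      have : ¬ ((j : ℕ) = (l : ℕ) + 1) := by omega
      simp [this]
    rw [hS2, hj0]
    -- goal: τ^0 * C(k,0) + 0 - τ^0 * (C(k,n-1) * C(n,0)) = RHS
    split_ifs with h
    · -- k + 1 < n : C(k, n-1) = 0
      have : Nat.choose (k : ℕ) (n - 1) = 0 := Nat.choose_eq_zero_of_lt (by omega)
      simp [Qmat, this, hj0]
    · -- k = n - 1 : 1 - 1 = 0
      have hk1 : (k : ℕ) = n - 1 := by omega
      simp [hk1]
  · -- j ≥ 1
    have hS2 : (∑ l, Qmat n τ k l * (if (j : ℕ) = (l : ℕ) + 1 then τ else 0)) =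
        τ ^ ((j : ℕ) - 1) * (Nat.choose (k : ℕ) ((j : ℕ) - 1) : ℝ) * τ := by
      rw [Finset.sum_eq_single (⟨(j : ℕ) - 1, by omega⟩ : Fin n)]
      · have : (j : ℕ) = ((j : ℕ) - 1) + 1 := by omega
        simp [Qmat, ← this]
      · intro b _ hb
        have : ¬ ((j : ℕ) = (b : ℕ) + 1) := by
          intro h; apply hb; apply Fin.ext; simp; omega
        simp [this]
      · simp
    rw [hS2]
    have hτj : τ ^ ((j : ℕ) - 1) * τ = τ ^ (j : ℕ) := by
      rw [← pow_succ]
      congr 1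
      omega
    have hpascal : (Nat.choose (k : ℕ) (j : ℕ) : ℝ) +
        (Nat.choose (k : ℕ) ((j : ℕ) - 1) : ℝ) =
        (Nat.choose ((k : ℕ) + 1) (j : ℕ) : ℝ) := by
      have hj1 : (j : ℕ) = ((j : ℕ) - 1) + 1 := by omega
      rw [hj1, Nat.choose_succ_succ ((k : ℕ)) ((j : ℕ) - 1)]
      push_cast
      ring
    split_ifs with h
    · -- k + 1 < n : C(k, n-1) = 0, use Pascal
      have hC : Nat.choose (k : ℕ) (n - 1) = 0 := Nat.choose_eq_zero_of_lt (by omega)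
      simp only [Qmat, Matrix.of_apply, hC, Nat.cast_zero, zero_mul, mul_zero, sub_zero]
      rw [← hpascal]
      calc τ ^ (j : ℕ) * (Nat.choose (k : ℕ) (j : ℕ) : ℝ) +
            τ ^ ((j : ℕ) - 1) * (Nat.choose (k : ℕ) ((j : ℕ) - 1) : ℝ) * τ
          = τ ^ (j : ℕ) * (Nat.choose (k : ℕ) (j : ℕ) : ℝ) +
            (τ ^ ((j : ℕ) - 1) * τ) * (Nat.choose (k : ℕ) ((j : ℕ) - 1) : ℝ) := by ring
        _ = _ := by rw [hτj]; ring
    · -- k = n - 1 : C(n-1,j) + C(n-1,j-1) = C(n,j)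
      have hk1 : (k : ℕ) = n - 1 := by omega
      have hn1 : (k : ℕ) + 1 = n := by omega
      have : (Nat.choose (k : ℕ) (j : ℕ) : ℝ) +
          (Nat.choose (k : ℕ) ((j : ℕ) - 1) : ℝ) = (Nat.choose n (j : ℕ) : ℝ) := by
        rw [hpascal, hn1]
      rw [hk1] at this ⊢
      rw [Nat.choose_self]
      calc τ ^ (j : ℕ) * (Nat.choose (n - 1) (j : ℕ) : ℝ) +
            τ ^ ((j : ℕ) - 1) * (Nat.choose (n - 1) ((j : ℕ) - 1) : ℝ) * τ -
            τ ^ (j : ℕ) * ((1 : ℕ) * (Nat.choose n (j : ℕ)) : ℝ)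
          = τ ^ (j : ℕ) * ((Nat.choose (n - 1) (j : ℕ) : ℝ) +
              (Nat.choose (n - 1) ((j : ℕ) - 1) : ℝ)) -
            τ ^ (j : ℕ) * (Nat.choose n (j : ℕ) : ℝ) := by
              rw [mul_add, ← hτj]; push_cast; ring
        _ = 0 := by rw [this]; ring

lemma Jmat_pow (n m : ℕ) :
    (Jmat n) ^ m = Matrix.of (fun k l : Fin n => if (l : ℕ) = (k : ℕ) + m then 1 else 0) := by
  induction m with
  | zero =>
    ext k l
    simp only [pow_zero, Matrix.one_apply, Matrix.of_apply, Nat.add_zero]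
    by_cases h : k = l
    · simp [h]
    · have : ¬ ((l : ℕ) = (k : ℕ)) := fun h' => h (Fin.ext h'.symm)
      simp [h, this]
  | succ m ih =>
    ext k l
    rw [pow_succ, ih, Matrix.mul_apply]
    simp only [Matrix.of_apply, Jmat]
    by_cases h : (k : ℕ) + m < n
    · rw [Finset.sum_eq_single (⟨(k : ℕ) + m, h⟩ : Fin n)]
      · simp [Nat.add_assoc]
      · intro b _ hb
        have : ¬ ((b : ℕ) = (k : ℕ) + m) := fun h' => hb (Fin.ext h')
        simp [this]
      · simp
    · have h1 : ¬ ((l : ℕ) = (k : ℕ) + (m + 1)) := by have := l.isLt; omega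
      rw [if_neg h1]
      apply Finset.sum_eq_zero
      intro t _
      have : ¬ ((t : ℕ) = (k : ℕ) + m) := by have := t.isLt; omega
      simp [this]

lemma Jmat_pow_n (n : ℕ) : (Jmat n) ^ n = 0 := by
  rw [Jmat_pow]
  ext k l
  have : ¬ ((l : ℕ) = (k : ℕ) + n) := by have := l.isLt; omega
  simp [this]

lemma Qmat_det_isUnit (n : ℕ) (τ : ℝ) (hτ : τ ≠ 0) : IsUnit (Qmat n τ).det := by
  have htri : (Qmat n τ).BlockTriangular OrderDual.toDual := by
    intro i j h
    have hij : (i : ℕ) < (j : ℕ) := h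
    simp [Qmat, Nat.choose_eq_zero_of_lt hij]
  rw [Matrix.det_of_lowerTriangular _ htri]
  rw [isUnit_iff_ne_zero]
  apply Finset.prod_ne_zero_iff.mpr
  intro i _
  simp [Qmat, pow_ne_zero _ hτ]

/-- for `λ ≠ 0` and `K(λ)_m = C(n,m−1)/(λ τ^{n−m+1})`, the characteristic
polynomial satisfies `det(zI − H(λ,K(λ))) = z^n` for all `z ∈ ℂ`, and consequently
`H(λ,K(λ)) = A − λBK(λ)` is nilpotent: `(A − λBK(λ))^n = 0`. -/
theorem stmt_11 (n : ℕ) (hn : 1 ≤ n) (τ : ℝ) (hτ : 0 < τ) (lam : ℝ) (hlam : lam ≠ 0) :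
    (∀ z : ℂ,
      (z • (1 : Matrix (Fin n) (Fin n) ℂ)
          - (Hmat n τ lam (Kdeadbeat n τ lam)).map (Complex.ofReal ·)).det = z ^ n)
    ∧ (Hmat n τ lam (Kdeadbeat n τ lam)) ^ n = 0 := by
  have hτ' : τ ≠ 0 := ne_of_gt hτ
  set H := Hmat n τ lam (Kdeadbeat n τ lam) with hHdef
  set Q := Qmat n τ with hQdef
  set J := Jmat n with hJdef
  have key : Q * H = J * Q := QH_eq_JQ n hn τ hτ' lam hlam
  have hdetQ : IsUnit Q.det := Qmat_det_isUnit n τ hτ'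
  have hQinv : Q⁻¹ * Q = 1 := Matrix.nonsing_inv_mul _ hdetQ
  have hQinv' : Q * Q⁻¹ = 1 := Matrix.mul_nonsing_inv _ hdetQ
  have hHfac : H = Q⁻¹ * (J * Q) := by
    rw [← key, ← Matrix.mul_assoc, hQinv, Matrix.one_mul]
  constructor
  · intro z
    -- work over ℂ
    set f : ℝ →+* ℂ := Complex.ofRealHom with hf
    set Qc := Q.map f with hQc
    set Jc := J.map f with hJc
    set Hc := H.map f with hHc
    have hmap : (fun x : ℝ => (Complex.ofReal x : ℂ)) = ⇑f := rfl
    have keyc : Qc * Hc = Jc * Qc := by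
      rw [hQc, hHc, hJc, ← Matrix.map_mul, ← Matrix.map_mul, key]
    have hdetQc : IsUnit Qc.det := by
      rw [hQc, show Q.map ⇑f = f.mapMatrix Q from rfl, ← RingHom.map_det]
      rw [isUnit_iff_ne_zero]
      simp only [hf, Complex.ofRealHom_eq_coe, ne_eq, Complex.ofReal_eq_zero]
      exact hdetQ.ne_zero
    have hQcinv : Qc⁻¹ * Qc = 1 := Matrix.nonsing_inv_mul _ hdetQc
    have hQcinv' : Qc * Qc⁻¹ = 1 := Matrix.mul_nonsing_inv _ hdetQc
    have hHcfac : Hc = Qc⁻¹ * (Jc * Qc) := by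
      rw [← keyc, ← Matrix.mul_assoc, hQcinv, Matrix.one_mul]
    have hfac : z • (1 : Matrix (Fin n) (Fin n) ℂ) - Hc =
        Qc⁻¹ * ((z • (1 : Matrix (Fin n) (Fin n) ℂ) - Jc) * Qc) := by
      rw [Matrix.sub_mul, Matrix.mul_sub, hHcfac]
      congr 1
      rw [Matrix.smul_mul, Matrix.one_mul, Matrix.mul_smul, hQcinv]
    have hgoal : ((z • (1 : Matrix (Fin n) (Fin n) ℂ)
        - H.map (Complex.ofReal ·)).det) = (z • (1 : Matrix (Fin n) (Fin n) ℂ) - Hc).det := by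
      rfl
    rw [hgoal, hfac, Matrix.det_mul, Matrix.det_mul, Matrix.det_nonsing_inv]
    have hdetJ : (z • (1 : Matrix (Fin n) (Fin n) ℂ) - Jc).det = z ^ n := by
      have htri : (z • (1 : Matrix (Fin n) (Fin n) ℂ) - Jc).BlockTriangular id := by
        intro i j hij
        have hij' : (j : ℕ) < (i : ℕ) := hij
        have h1 : (1 : Matrix (Fin n) (Fin n) ℂ) i j = 0 :=
          Matrix.one_apply_ne (fun h => by subst h; exact lt_irrefl _ hij')
        have h2 : Jc i j = 0 := by
          have : ¬ ((j : ℕ) = (i : ℕ) + 1) := by omega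
          simp [hJc, hJdef, Jmat, this]
        simp [Matrix.sub_apply, Matrix.smul_apply, h1, h2]
      rw [Matrix.det_of_upperTriangular htri]
      have hdiag : ∀ i : Fin n, (z • (1 : Matrix (Fin n) (Fin n) ℂ) - Jc) i i = z := by
        intro i
        have h2 : Jc i i = 0 := by
          have : ¬ ((i : ℕ) = (i : ℕ) + 1) := by omega
          simp [hJc, hJdef, Jmat, this]
        simp [Matrix.sub_apply, Matrix.smul_apply, h2, Matrix.one_apply_eq]
      rw [Finset.prod_congr rfl (fun i _ => hdiag i)]
      simp
    rw [hdetJ]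
    rw [mul_comm, mul_assoc, Ring.mul_inverse_cancel _ hdetQc, mul_one]
  · have hpow : ∀ m : ℕ, H ^ m = Q⁻¹ * (J ^ m) * Q := by
      intro m
      induction m with
      | zero => rw [pow_zero, pow_zero, Matrix.mul_one, hQinv]
      | succ m ih =>
        rw [pow_succ, ih, hHfac, pow_succ]
        calc Q⁻¹ * J ^ m * Q * (Q⁻¹ * (J * Q))
            = Q⁻¹ * J ^ m * (Q * Q⁻¹) * (J * Q) := by
              simp only [Matrix.mul_assoc]
          _ = Q⁻¹ * (J ^ m * J) * Q := by
              rw [hQinv']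
              simp only [Matrix.mul_assoc, Matrix.one_mul]
    rw [hpow n, Jmat_pow_n, Matrix.mul_zero, Matrix.zero_mul]
end

section
/- Let n ≥ 1, τ > 0, and let A, B be as in the context, and let L be the symmetric Laplacian of a connected undirected graph on N nodes whose distinct nonzero eigenvalues are λ_{p_0} > λ_{p_1} > … > λ_{p_{l̄−1}} (l̄ distinct values). Define the time-varying gains K(k) ∈ ℝ^{1×n} by K_m(nl + j) = C(n, m−1)/(λ_{p_l} τ^{n−m+1}) for l = 0,…,l̄−1, j = 0,…,n−1, m = 1,…,n, and K(k) = 0 for k ≥ n l̄. Then the closed-loop system x(k+1) = (I_N ⊗ A − L ⊗ B K(k)) x(k) reaches consensus at step n l̄: for every initial state x(0) and every k ≥ n l̄, x(k) = (1/N)(𝟙_N 𝟙_N^T ⊗ A^k) x(0); in particular all agents' states are equal for k ≥ n l̄. -/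
open Matrix Kronecker

/-- the constant matrix `μ • B K(μ)` (independent of `μ`). -/
noncomputable def Emat (n : ℕ) (τ : ℝ) : Matrix (Fin n) (Fin n) ℝ :=
  Matrix.of fun i m => if (i : ℕ) = n - 1 then (n.choose m : ℝ) * τ ^ ((m : ℕ)+1) / τ ^ n else 0

/-- closed-loop single-agent matrix, nilpotent. -/
noncomputable def Mmat (n : ℕ) (τ : ℝ) : Matrix (Fin n) (Fin n) ℝ := Amat n τ - Emat n τ

/-- Pascal-type left Jordan chain matrix. -/
noncomputable def Wmat (n : ℕ) (τ : ℝ) : Matrix (Fin n) (Fin n) ℝ :=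
  Matrix.of fun k j => ((n - 1 - (k : ℕ)).choose j : ℝ) * τ ^ (j : ℕ)

noncomputable def Vmat (n : ℕ) (τ : ℝ) : Matrix (Fin n) (Fin n) ℝ :=
  Matrix.of fun j k => (-1 : ℝ) ^ ((j : ℕ) + (n - 1 - (k : ℕ))) * ((j : ℕ).choose (n - 1 - (k : ℕ)) : ℝ) / τ ^ (j : ℕ)

def Tmat (n : ℕ) : Matrix (Fin n) (Fin n) ℝ :=
  Matrix.of fun k l => if (l : ℕ) + 1 = (k : ℕ) then 1 else 0

-- alternating binomial sum
lemma alt_sum_real (m R : ℕ) (h : m < R) :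
    ∑ t ∈ Finset.range R, (-1:ℝ)^t * ((m.choose t : ℕ) : ℝ) = if m = 0 then 1 else 0 := by
  have hsub : Finset.range (m+1) ⊆ Finset.range R := Finset.range_subset_range.2 (by omega)
  rw [← Finset.sum_subset hsub (by
    intro t _ ht
    simp only [Finset.mem_range, not_lt] at ht
    rw [Nat.choose_eq_zero_of_lt (by omega)]
    simp)]
  have h0 := Int.alternating_sum_range_choose (n := m)
  have h2 : ((∑ i ∈ Finset.range (m+1), (-1:ℤ)^i * (m.choose i : ℤ) : ℤ) : ℝ)
      = ((if m = 0 then (1:ℤ) else 0 : ℤ) : ℝ) := by exact_mod_cast congrArg (fun z : ℤ => (z:ℝ)) h0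
  push_cast at h2
  rw [h2]

lemma key_sum_s12 (n d e : ℕ) (hd : d < n) :
    ∑ j ∈ Finset.range n, (-1 : ℝ) ^ j * (d.choose j : ℝ) * (j.choose e : ℝ)
      = if d = e then (-1 : ℝ) ^ e else 0 := by
  by_cases he : e ≤ d
  · have h1 : ∀ j ∈ Finset.range n, (-1 : ℝ) ^ j * (d.choose j : ℝ) * (j.choose e : ℝ)
        = (d.choose e : ℝ) * ((-1 : ℝ) ^ j * ((d-e).choose (j-e) : ℝ) * (if e ≤ j then 1 else 0)) := by
      intro j _
      by_cases hej : e ≤ j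
      · by_cases hjd : j ≤ d
        · have := Nat.choose_mul (n := d) hej
          simp only [if_pos hej, mul_one]
          have h2 : ((d.choose j : ℕ) : ℝ) * ((j.choose e : ℕ) : ℝ)
              = ((d.choose e : ℕ) : ℝ) * (((d-e).choose (j-e) : ℕ) : ℝ) := by
            exact_mod_cast congrArg (fun z : ℕ => (z : ℝ)) this
          linear_combination ((-1:ℝ)^j) * h2
        · push_neg at hjd
          rw [Nat.choose_eq_zero_of_lt hjd, Nat.choose_eq_zero_of_lt (by omega : d - e < j - e)]
          simp
      · rw [Nat.choose_eq_zero_of_lt (show j < e by omega)]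
        simp [hej]
    rw [Finset.sum_congr rfl h1, ← Finset.mul_sum]
    have h2 : ∑ j ∈ Finset.range n, ((-1 : ℝ) ^ j * (((d-e).choose (j-e) : ℕ) : ℝ) * (if e ≤ j then 1 else 0))
        = ∑ j ∈ Finset.Ico e n, (-1 : ℝ) ^ j * (((d-e).choose (j-e) : ℕ) : ℝ) := by
      have ha : ∑ j ∈ Finset.Ico 0 e, (-1:ℝ)^j * (((d-e).choose (j-e) : ℕ) : ℝ) * (if e ≤ j then 1 else 0) = 0 :=
        Finset.sum_eq_zero (fun j hj => by
          simp [show ¬ e ≤ j by simpa using (Finset.mem_Ico.1 hj).2])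
      have hb : ∑ j ∈ Finset.Ico e n, (-1:ℝ)^j * (((d-e).choose (j-e) : ℕ) : ℝ) * (if e ≤ j then 1 else 0)
          = ∑ j ∈ Finset.Ico e n, (-1:ℝ)^j * (((d-e).choose (j-e) : ℕ) : ℝ) :=
        Finset.sum_congr rfl (fun j hj => by simp [(Finset.mem_Ico.1 hj).1])
      rw [Finset.range_eq_Ico, ← Finset.sum_Ico_consecutive _ (Nat.zero_le e) (show e ≤ n by omega), ha, hb, zero_add]
    rw [h2, Finset.sum_Ico_eq_sum_range]
    have h3 : ∀ t ∈ Finset.range (n - e), (-1:ℝ)^(e+t) * (((d-e).choose (e+t-e) : ℕ) : ℝ)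
        = ((-1:ℝ)^e) * ((-1:ℝ)^t * (((d-e).choose t : ℕ) : ℝ)) := by
      intro t _
      rw [show e + t - e = t by omega, pow_add]
      ring
    rw [Finset.sum_congr rfl h3, ← Finset.mul_sum, alt_sum_real (d-e) (n-e) (by omega)]
    by_cases hde : d = e
    · simp [hde]
    · rw [if_neg (by omega), if_neg hde]
      ring
  · push_neg at he
    have h1 : ∀ j ∈ Finset.range n, (-1 : ℝ) ^ j * (d.choose j : ℝ) * (j.choose e : ℝ) = 0 := by
      intro j _
      by_cases hjd : j ≤ d
      · rw [Nat.choose_eq_zero_of_lt (show j < e by omega)]; push_cast; ring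
      · push_neg at hjd; rw [Nat.choose_eq_zero_of_lt (show d < j from hjd)]; push_cast; ring
    rw [Finset.sum_congr rfl h1, Finset.sum_const, smul_zero, if_neg (by omega)]

lemma pascal' (a b : ℕ) (ha : 1 ≤ a) (hb : 1 ≤ b) :
    a.choose b = (a-1).choose (b-1) + (a-1).choose b := by
  obtain ⟨a', rfl⟩ : ∃ a', a = a' + 1 := ⟨a - 1, by omega⟩
  obtain ⟨b', rfl⟩ : ∃ b', b = b' + 1 := ⟨b - 1, by omega⟩
  simp [Nat.choose_succ_succ]

lemma Wmat_mul_Vmat (n : ℕ) (τ : ℝ) (hτ : τ ≠ 0) : Wmat n τ * Vmat n τ = 1 := by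
  ext k k'
  rw [Matrix.mul_apply]
  have h1 : ∀ j : Fin n, Wmat n τ k j * Vmat n τ j k'
      = (-1:ℝ)^((n-1-(k':ℕ))) * ((-1:ℝ)^(j:ℕ) * ((n-1-(k:ℕ)).choose (j:ℕ) : ℝ) * ((j:ℕ).choose (n-1-(k':ℕ)) : ℝ)) := by
    intro j
    simp only [Wmat, Vmat, Matrix.of_apply]
    rw [pow_add]
    field_simp
  rw [Finset.sum_congr rfl (fun j _ => h1 j), ← Finset.mul_sum]
  rw [Fin.sum_univ_eq_sum_range (fun j => (-1:ℝ)^j * ((n-1-(k:ℕ)).choose j : ℝ) * ((j).choose (n-1-(k':ℕ)) : ℝ))]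
  rw [key_sum_s12 n (n-1-(k:ℕ)) (n-1-(k':ℕ)) (by have := k.isLt; omega)]
  have hk := k.isLt; have hk' := k'.isLt
  by_cases h : k = k'
  · subst h
    rw [if_pos rfl, Matrix.one_apply_eq, ← pow_add, ← two_mul, pow_mul]
    simp
  · rw [if_neg (fun hc => h (Fin.ext (by omega))), Matrix.one_apply_ne h, mul_zero]

lemma Wmat_mul_Mmat (n : ℕ) (hn : 1 ≤ n) (τ : ℝ) (hτ : 0 < τ) :
    Wmat n τ * Mmat n τ = Tmat n * Wmat n τ := by
  have hτ' : τ ≠ 0 := ne_of_gt hτ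
  ext k j
  have hkn : (k:ℕ) < n := k.isLt
  have hjn : (j:ℕ) < n := j.isLt
  -- RHS
  have hR : (Tmat n * Wmat n τ) k j
      = if 1 ≤ (k:ℕ) then ((n - 1 - ((k:ℕ)-1)).choose (j:ℕ) : ℝ) * τ^(j:ℕ) else 0 := by
    rw [Matrix.mul_apply]
    by_cases hk : 1 ≤ (k:ℕ)
    · rw [if_pos hk, Finset.sum_eq_single (⟨(k:ℕ)-1, by omega⟩ : Fin n)]
      · simp only [Tmat, Wmat, Matrix.of_apply, Fin.val_mk]
        rw [if_pos (show (k:ℕ) - 1 + 1 = (k:ℕ) by omega)]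
        rw [one_mul]
      · intro l _ hl
        simp only [Tmat, Matrix.of_apply]
        rw [if_neg (fun hc => hl (Fin.ext (by simp at hc ⊢; omega)))]
        ring
      · intro h; exact absurd (Finset.mem_univ _) h
    · rw [if_neg hk]
      apply Finset.sum_eq_zero
      intro l _
      simp only [Tmat, Matrix.of_apply]
      rw [if_neg (by omega)]
      ring
  -- LHS
  have hA : ∑ j' : Fin n, Wmat n τ k j' * Amat n τ j' j
      = ((n-1-(k:ℕ)).choose (j:ℕ) : ℝ) * τ^(j:ℕ)
        + (if 1 ≤ (j:ℕ) then ((n-1-(k:ℕ)).choose ((j:ℕ)-1) : ℝ) * τ^(j:ℕ) else 0) := by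
    have expand : ∀ j' : Fin n, Wmat n τ k j' * Amat n τ j' j
        = (if j' = j then ((n-1-(k:ℕ)).choose (j:ℕ) : ℝ) * τ^(j:ℕ) else 0)
          + (if (j:ℕ) = (j':ℕ)+1 then ((n-1-(k:ℕ)).choose (j':ℕ) : ℝ) * τ^((j':ℕ)+1) else 0) := by
      intro j'
      simp only [Wmat, Amat, Matrix.of_apply]
      by_cases h1 : (j:ℕ) = (j':ℕ)
      · have : j' = j := Fin.ext h1.symm
        subst this
        rw [if_pos rfl, if_pos rfl, if_neg (by omega)]
        simp
      · rw [if_neg h1, if_neg (fun hc => h1 (congrArg Fin.val hc).symm)]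
        by_cases h2 : (j:ℕ) = (j':ℕ)+1
        · rw [if_pos h2, if_pos h2, pow_succ]
          ring
        · rw [if_neg h2, if_neg h2]
          ring
    rw [Finset.sum_congr rfl (fun j' _ => expand j'), Finset.sum_add_distrib]
    congr 1
    · rw [Finset.sum_ite_eq' Finset.univ j]
      simp
    · by_cases hj : 1 ≤ (j:ℕ)
      · rw [if_pos hj, Finset.sum_eq_single (⟨(j:ℕ)-1, by omega⟩ : Fin n)]
        · rw [if_pos (by simp; omega)]
          congr 2 <;> simp <;> omega
        · intro l _ hl
          rw [if_neg (fun hc => hl (Fin.ext (by simp at hc ⊢; omega)))]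
        · intro h; exact absurd (Finset.mem_univ _) h
      · rw [if_neg hj]
        apply Finset.sum_eq_zero
        intro l _
        rw [if_neg (by omega)]
  have hE : ∑ j' : Fin n, Wmat n τ k j' * Emat n τ j' j
      = ((n-1-(k:ℕ)).choose (n-1) : ℝ) * ((n.choose (j:ℕ) : ℝ)) * τ^(j:ℕ) := by
    rw [Finset.sum_eq_single (⟨n-1, by omega⟩ : Fin n)]
    · simp only [Wmat, Emat, Matrix.of_apply]
      rw [if_pos (by simp)]
      have e1 : τ^(n-1) * τ^((j:ℕ)+1) = τ^(j:ℕ) * τ^n := by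
        rw [← pow_add, ← pow_add]
        congr 1
        omega
      have harith : τ^(n-1) * ((n.choose (j:ℕ) : ℝ) * τ^((j:ℕ)+1) / τ^n)
          = (n.choose (j:ℕ) : ℝ) * τ^(j:ℕ) := by
        field_simp
        linear_combination (n.choose (j:ℕ) : ℝ) * e1
      rw [mul_assoc, harith]
      ring_nf
    · intro l _ hl
      simp only [Emat, Matrix.of_apply]
      rw [if_neg (fun hc => hl (Fin.ext (by simp at hc ⊢; omega)))]
      ring
    · intro h; exact absurd (Finset.mem_univ _) h
  have hL : (Wmat n τ * Mmat n τ) k j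
      = (∑ j' : Fin n, Wmat n τ k j' * Amat n τ j' j)
        - ∑ j' : Fin n, Wmat n τ k j' * Emat n τ j' j := by
    rw [Matrix.mul_apply, ← Finset.sum_sub_distrib]
    apply Finset.sum_congr rfl
    intro j' _
    simp [Mmat, mul_sub]
  rw [hL, hA, hE, hR]
  by_cases hk : 1 ≤ (k:ℕ)
  · rw [if_pos hk]
    rw [Nat.choose_eq_zero_of_lt (by omega : n-1-(k:ℕ) < n-1)]
    have hd : n - 1 - ((k:ℕ)-1) = (n-1-(k:ℕ)) + 1 := by omega
    rw [hd]
    by_cases hj : 1 ≤ (j:ℕ)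
    · rw [if_pos hj]
      have hcc := pascal' ((n-1-(k:ℕ))+1) (j:ℕ) (by omega) hj
      simp only [Nat.add_sub_cancel] at hcc
      rw [hcc]
      push_cast
      ring
    · rw [if_neg hj]
      have : (j:ℕ) = 0 := by omega
      rw [this]
      simp
  · rw [if_neg hk]
    have hk0 : (k:ℕ) = 0 := by omega
    rw [hk0]
    simp only [Nat.sub_zero]
    rw [Nat.choose_self]
    by_cases hj : 1 ≤ (j:ℕ)
    · rw [if_pos hj]
      rw [pascal' n (j:ℕ) hn hj]
      push_cast
      ring
    · rw [if_neg hj]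
      have hj0 : (j:ℕ) = 0 := by omega
      rw [hj0]
      simp

lemma Tmat_pow (n p : ℕ) (k l : Fin n) :
    (Tmat n ^ p) k l = if (l:ℕ) + p = (k:ℕ) then 1 else 0 := by
  induction p generalizing k l with
  | zero =>
    rw [pow_zero, Matrix.one_apply]
    by_cases h : k = l
    · subst h; rw [if_pos rfl, if_pos (by omega)]
    · rw [if_neg h, if_neg (fun hc => h (Fin.ext (by omega)))]
  | succ p ih =>
    rw [pow_succ, Matrix.mul_apply]
    by_cases hl : (l:ℕ) + 1 < n
    · rw [Finset.sum_eq_single (⟨(l:ℕ)+1, hl⟩ : Fin n)]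
      · rw [ih]
        simp only [Tmat, Matrix.of_apply, Fin.val_mk]
        simp only [if_true, mul_one]
        by_cases h : (l:ℕ) + 1 + p = (k:ℕ)
        · rw [if_pos h, if_pos (by omega)]
        · rw [if_neg h, if_neg (by omega)]
      · intro m _ hm
        simp only [Tmat, Matrix.of_apply]
        rw [if_neg (fun hc => hm (Fin.ext (by simp at hc ⊢; omega)))]
        ring
      · intro h; exact absurd (Finset.mem_univ _) h
    · have hz : ∀ m : Fin n, (Tmat n ^ p) k m * Tmat n m l = 0 := by
        intro m
        simp only [Tmat, Matrix.of_apply]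
        rw [if_neg (by have := m.isLt; omega)]
        ring
      rw [Finset.sum_congr rfl (fun m _ => hz m), Finset.sum_const, smul_zero]
      rw [if_neg (by have := k.isLt; omega)]

lemma Mmat_pow_eq_zero (n : ℕ) (hn : 1 ≤ n) (τ : ℝ) (hτ : 0 < τ) :
    Mmat n τ ^ n = 0 := by
  have hτ' : τ ≠ 0 := ne_of_gt hτ
  have hWM : ∀ p : ℕ, Wmat n τ * Mmat n τ ^ p = Tmat n ^ p * Wmat n τ := by
    intro p
    induction p with
    | zero => simp
    | succ p ih =>
      rw [pow_succ, pow_succ, ← Matrix.mul_assoc, ih, Matrix.mul_assoc,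
        Wmat_mul_Mmat n hn τ hτ, ← Matrix.mul_assoc]
  have hTn : Tmat n ^ n = 0 := by
    ext k l
    rw [Tmat_pow]
    rw [if_neg (by have := k.isLt; omega)]
    simp
  have hVW : Vmat n τ * Wmat n τ = 1 :=
    mul_eq_one_comm.mp (Wmat_mul_Vmat n τ hτ')
  calc Mmat n τ ^ n = (Vmat n τ * Wmat n τ) * Mmat n τ ^ n := by rw [hVW, Matrix.one_mul]
    _ = Vmat n τ * (Tmat n ^ n * Wmat n τ) := by rw [Matrix.mul_assoc, hWM]
    _ = 0 := by rw [hTn, Matrix.zero_mul, Matrix.mul_zero]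

lemma step_lemma {n N : ℕ} (τ : ℝ) (L : Matrix (Fin N) (Fin N) ℝ) (K : Matrix (Fin 1) (Fin n) ℝ)
    (v : Fin N → ℝ) (μ : ℝ) (hv : Matrix.vecMul v L = fun i => μ * v i)
    (z : Fin N × Fin n → ℝ) (j : Fin n) :
    ∑ i, v i * ((((1 : Matrix (Fin N) (Fin N) ℝ) ⊗ₖ Amat n τ - L ⊗ₖ (Bmat n τ * K)) *ᵥ z) (i, j))
      = ((Amat n τ - μ • (Bmat n τ * K)) *ᵥ (fun j' => ∑ i, v i * z (i, j'))) j := by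
  have hvL : ∀ i', ∑ i, v i * L i i' = μ * v i' := by
    intro i'
    have := congrFun hv i'
    simpa [Matrix.vecMul, dotProduct] using this
  calc ∑ i, v i * ((((1 : Matrix (Fin N) (Fin N) ℝ) ⊗ₖ Amat n τ - L ⊗ₖ (Bmat n τ * K)) *ᵥ z) (i, j))
      = ∑ i, ∑ i', ∑ j', v i * (((if i = i' then (1:ℝ) else 0) * Amat n τ j j'
          - L i i' * (Bmat n τ * K) j j') * z (i', j')) := by
        apply Finset.sum_congr rfl
        intro i _
        rw [Matrix.mulVec, dotProduct, Fintype.sum_prod_type, Finset.mul_sum]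
        apply Finset.sum_congr rfl
        intro i' _
        rw [Finset.mul_sum]
        apply Finset.sum_congr rfl
        intro j' _
        simp only [Matrix.sub_apply, Matrix.kroneckerMap_apply, Matrix.one_apply]
        try ring
    _ = ∑ i', ∑ j', ∑ i, v i * (((if i = i' then (1:ℝ) else 0) * Amat n τ j j'
          - L i i' * (Bmat n τ * K) j j') * z (i', j')) := by
        rw [Finset.sum_comm]
        apply Finset.sum_congr rfl
        intro i' _
        rw [Finset.sum_comm]
    _ = ∑ i', ∑ j', (v i' * Amat n τ j j' - μ * v i' * (Bmat n τ * K) j j') * z (i', j') := by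
        apply Finset.sum_congr rfl
        intro i' _
        apply Finset.sum_congr rfl
        intro j' _
        have expand : ∀ i : Fin N, v i * (((if i = i' then (1:ℝ) else 0) * Amat n τ j j'
            - L i i' * (Bmat n τ * K) j j') * z (i', j'))
            = (if i = i' then v i' * Amat n τ j j' * z (i', j') else 0)
              - (v i * L i i') * ((Bmat n τ * K) j j' * z (i', j')) := by
          intro i
          by_cases h : i = i'
          · subst h; simp; ring
          · simp only [if_neg h]; ring
        rw [Finset.sum_congr rfl (fun i _ => expand i), Finset.sum_sub_distrib,
          Finset.sum_ite_eq' Finset.univ i', ← Finset.sum_mul, hvL]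
        simp only [Finset.mem_univ, if_pos]
        ring
    _ = ((Amat n τ - μ • (Bmat n τ * K)) *ᵥ (fun j' => ∑ i, v i * z (i, j'))) j := by
        rw [Finset.sum_comm]
        simp only [Matrix.mulVec, dotProduct]
        apply Finset.sum_congr rfl
        intro j' _
        rw [Finset.mul_sum]
        apply Finset.sum_congr rfl
        intro i' _
        simp only [Matrix.sub_apply, Matrix.smul_apply, smul_eq_mul]
        ring
/-- finite-time consensus.  `L` is the symmetric Laplacian of a connected
graph (`L𝟙 = 0`, kernel spanned by `𝟙`, i.e. `0` is a simple eigenvalue) whose distinct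
nonzero eigenvalues are `μ_0 > μ_1 > … > μ_{l̄−1} > 0`.  With the time-varying gains
`K_m(nl + j) = C(n, m−1)/(μ_l τ^{n−m+1})` for `l < l̄`, `j < n` (i.e. `l = k / n`), and
`K(k) = 0` for `k ≥ n l̄`, the closed-loop system `x(k+1) = (I_N ⊗ A − L ⊗ B K(k)) x(k)`
reaches consensus at step `n l̄`: `x(k) = (1/N)(𝟙𝟙ᵀ ⊗ A^k) x(0)` for all `k ≥ n l̄`. -/
theorem stmt_12 (n : ℕ) (hn : 1 ≤ n) (τ : ℝ) (hτ : 0 < τ)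
    (N : ℕ) (hN : 1 ≤ N) (L : Matrix (Fin N) (Fin N) ℝ)
    (hsym : L.IsSymm)
    (hL1 : L *ᵥ (fun _ => (1 : ℝ)) = 0)
    (hker : ∀ v : Fin N → ℝ, L *ᵥ v = 0 → ∃ c : ℝ, v = fun _ => c)
    (lbar : ℕ) (mu : Fin lbar → ℝ)
    (hmu : StrictAnti mu) (hmupos : ∀ l, 0 < mu l)
    (hspec : spectrum ℝ L = insert 0 (Set.range mu))
    (Kt : ℕ → Matrix (Fin 1) (Fin n) ℝ)
    (hKt : ∀ k, ∀ hk : k < n * lbar, ∀ m : Fin n,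
      Kt k 0 m = (Nat.choose n (m : ℕ) : ℝ)
        / (mu ⟨k / n, Nat.div_lt_of_lt_mul hk⟩ * τ ^ (n - (m : ℕ))))
    (hKt0 : ∀ k, n * lbar ≤ k → Kt k = 0)
    (x : ℕ → Fin N × Fin n → ℝ)
    (hx : ∀ k, x (k + 1) =
      ((1 : Matrix (Fin N) (Fin N) ℝ) ⊗ₖ Amat n τ - L ⊗ₖ (Bmat n τ * Kt k)) *ᵥ x k) :
    ∀ k, n * lbar ≤ k →
      x k = ((N : ℝ)⁻¹ • ((Matrix.of fun _ _ => (1 : ℝ)) ⊗ₖ (Amat n τ ^ k))) *ᵥ x 0 := by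
  have hτ' : τ ≠ 0 := ne_of_gt hτ
  -- Hermitian structure
  have hH : L.IsHermitian := by
    ext i j
    rw [Matrix.conjTranspose_apply, star_trivial]
    exact hsym.apply i j
  set U : Matrix (Fin N) (Fin N) ℝ := (Matrix.IsHermitian.eigenvectorUnitary hH : Matrix (Fin N) (Fin N) ℝ) with hU
  set lam : Fin N → ℝ := hH.eigenvalues with hlam
  have hUentry : ∀ (i α : Fin N), U i α = (hH.eigenvectorBasis α) i := fun i α => rfl
  have hcomp : ∀ i i' : Fin N, ∑ α, U i α * U i' α = if i = i' then (1:ℝ) else 0 := by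
    intro i i'
    have h1 : U * star U = 1 := Matrix.mem_unitaryGroup_iff.mp (Matrix.IsHermitian.eigenvectorUnitary hH).2
    have := congrFun (congrFun h1 i) i'
    rw [Matrix.mul_apply] at this
    simp only [Matrix.star_apply, star_trivial, Matrix.one_apply] at this
    exact this
  have horth : ∀ α β : Fin N, ∑ i, U i α * U i β = if α = β then (1:ℝ) else 0 := by
    intro α β
    have h1 : star U * U = 1 := Matrix.mem_unitaryGroup_iff'.mp (Matrix.IsHermitian.eigenvectorUnitary hH).2
    have := congrFun (congrFun h1 α) β
    rw [Matrix.mul_apply] at this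
    simp only [Matrix.star_apply, star_trivial, Matrix.one_apply] at this
    exact this
  have heig : ∀ α : Fin N, L *ᵥ (fun i => U i α) = fun i => lam α * U i α := by
    intro α
    have := hH.mulVec_eigenvectorBasis α
    funext i
    have h2 := congrFun this i
    simpa [hUentry] using h2
  have hvm : ∀ α : Fin N, Matrix.vecMul (fun i => U i α) L = fun i => lam α * U i α := by
    intro α
    funext p
    have h2 := congrFun (heig α) p
    rw [Matrix.mulVec, dotProduct] at h2
    rw [Matrix.vecMul, dotProduct]
    rw [← h2]
    apply Finset.sum_congr rfl
    intro i _
    rw [hsym.apply p i]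
    ring
  -- the auxiliary sequences
  set y : Fin N → ℕ → Fin n → ℝ := fun α k j => ∑ i, U i α * x k (i, j) with hy
  have hyrec : ∀ (α : Fin N) (k : ℕ),
      y α (k+1) = (Amat n τ - lam α • (Bmat n τ * Kt k)) *ᵥ y α k := by
    intro α k
    funext j
    have := step_lemma τ L (Kt k) (fun i => U i α) (lam α) (hvm α) (x k) j
    rw [hy]
    simp only
    rw [hx k]
    exact this
  -- zero eigenvalue: free evolution
  have hy0 : ∀ α, lam α = 0 → ∀ k, y α k = (Amat n τ) ^ k *ᵥ y α 0 := by
    intro α hα k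
    induction k with
    | zero => simp
    | succ k ih =>
      rw [hyrec α k, hα, zero_smul, sub_zero, ih, Matrix.mulVec_mulVec, ← pow_succ']
  -- nonzero eigenvalue: deadbeat to zero
  have hynz : ∀ α, lam α ≠ 0 → ∀ k, n * lbar ≤ k → y α k = 0 := by
    intro α hα
    have hmem : lam α ∈ spectrum ℝ L := hH.eigenvalues_mem_spectrum_real α
    rw [hspec] at hmem
    rcases hmem with h0 | ⟨l, hl⟩
    · exact absurd h0 hα
    -- step matrices in block l are Mmat
    have hstepM : ∀ k, n * (l:ℕ) ≤ k → k < n * ((l:ℕ)+1) →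
        Amat n τ - lam α • (Bmat n τ * Kt k) = Mmat n τ := by
      intro k hk1 hk2
      have hklt : k < n * lbar := lt_of_lt_of_le hk2 (Nat.mul_le_mul_left n l.isLt)
      have hdiv : k / n = (l:ℕ) := by
        apply Nat.div_eq_of_lt_le
        · rwa [mul_comm]
        · rwa [mul_comm]
      have hKtk : ∀ m : Fin n, Kt k 0 m
          = (n.choose (m:ℕ) : ℝ) / (mu l * τ ^ (n - (m:ℕ))) := by
        intro m
        rw [hKt k hklt m]
        congr 2
        exact congrArg mu (Fin.ext hdiv)
      have hBK : ∀ (i : Fin n) (m : Fin n), (Bmat n τ * Kt k) i m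
          = (if (i:ℕ) = n - 1 then τ else 0) * ((n.choose (m:ℕ) : ℝ) / (mu l * τ ^ (n - (m:ℕ)))) := by
        intro i m
        rw [Matrix.mul_apply, Fin.sum_univ_one, hKtk m]
        congr 1
      have hmul : mu l ≠ 0 := ne_of_gt (hmupos l)
      rw [Mmat]
      congr 1
      ext i m
      rw [Matrix.smul_apply, hBK i m, ← hl, Emat, Matrix.of_apply]
      by_cases hi : (i:ℕ) = n - 1
      · rw [if_pos hi, if_pos hi, smul_eq_mul]
        have hmn : (m:ℕ) < n := m.isLt
        have e1 : τ ^ (m:ℕ) * τ ^ (n - (m:ℕ)) = τ ^ n := by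
          rw [← pow_add]
          congr 1
          omega
        field_simp
        linear_combination (-(τ * (n.choose (m:ℕ) : ℝ))) * e1
      · rw [if_neg hi, if_neg hi, smul_eq_mul]
        ring
    -- block evolution
    have hblock : ∀ p, p ≤ n → y α (n * (l:ℕ) + p) = (Mmat n τ) ^ p *ᵥ y α (n * (l:ℕ)) := by
      intro p hp
      induction p with
      | zero => simp
      | succ p ih =>
        have hp' : p ≤ n := Nat.le_of_succ_le hp
        rw [show n * (l:ℕ) + (p+1) = (n * (l:ℕ) + p) + 1 by omega, hyrec α,
          hstepM (n * (l:ℕ) + p) (by omega) (by rw [Nat.mul_succ]; omega), ih hp',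
          Matrix.mulVec_mulVec, ← pow_succ']
    have hzero : y α (n * (l:ℕ) + n) = 0 := by
      rw [hblock n (le_refl n), Mmat_pow_eq_zero n hn τ hτ, Matrix.zero_mulVec]
    have hforever : ∀ k, n * (l:ℕ) + n ≤ k → y α k = 0 := by
      intro k hk
      induction k with
      | zero => exact absurd hk (by omega)
      | succ k ih =>
        by_cases hkk : n * (l:ℕ) + n ≤ k
        · rw [hyrec α k, ih hkk, Matrix.mulVec_zero]
        · have : k + 1 = n * (l:ℕ) + n := by omega
          rw [this]
          exact hzero
    intro k hk
    apply hforever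
    have : (l:ℕ) + 1 ≤ lbar := l.isLt
    calc n * (l:ℕ) + n = n * ((l:ℕ)+1) := by ring
      _ ≤ n * lbar := Nat.mul_le_mul_left n this
      _ ≤ k := hk
  -- expansion in eigenbasis
  have hexp : ∀ k (i : Fin N) (j : Fin n), x k (i, j) = ∑ α, U i α * y α k j := by
    intro k i j
    have h1 : x k (i, j) = ∑ i', (if i = i' then (1:ℝ) else 0) * x k (i', j) := by
      simp
    rw [h1]
    have h2 : ∀ i', (if i = i' then (1:ℝ) else 0) * x k (i', j)
        = ∑ α, U i α * U i' α * x k (i', j) := by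
      intro i'
      rw [← Finset.sum_mul, hcomp i i']
    rw [Finset.sum_congr rfl (fun i' _ => h2 i'), Finset.sum_comm]
    apply Finset.sum_congr rfl
    intro α _
    rw [hy]
    simp only
    rw [Finset.mul_sum]
    apply Finset.sum_congr rfl
    intro i' _
    ring
  -- zero eigenvectors are constant
  have hconst : ∀ α, lam α = 0 → ∃ c : ℝ, (∀ i, U i α = c) ∧ c * c * N = 1 := by
    intro α hα
    have h1 : L *ᵥ (fun i => U i α) = 0 := by
      rw [heig α, hα]
      funext i
      simp
    obtain ⟨c, hc⟩ := hker _ h1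
    refine ⟨c, fun i => congrFun hc i, ?_⟩
    have h2 := horth α α
    rw [if_pos rfl] at h2
    have h3 : ∀ i : Fin N, U i α * U i α = c * c := by
      intro i
      rw [congrFun hc i]
    rw [Finset.sum_congr rfl (fun i _ => h3 i), Finset.sum_const, Finset.card_univ,
      Fintype.card_fin, nsmul_eq_mul] at h2
    rw [mul_comm] at h2
    exact h2
  -- existence of zero eigenvalue
  have hexistZ : ∃ α₀, lam α₀ = 0 := by
    by_contra hno
    push_neg at hno
    have hs : ∀ α, ∑ i, U i α = 0 := by
      intro α
      have h1 : lam α * ∑ i, U i α = 0 := by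
        rw [Finset.mul_sum]
        have h2 : ∀ i : Fin N, lam α * U i α = ∑ p, L i p * U p α := by
          intro i
          have := congrFun (heig α) i
          rw [Matrix.mulVec, dotProduct] at this
          rw [this]
        rw [Finset.sum_congr rfl (fun i _ => h2 i), Finset.sum_comm]
        apply Finset.sum_eq_zero
        intro p _
        rw [← Finset.sum_mul]
        have h3 : ∑ i, L i p = 0 := by
          have := congrFun hL1 p
          rw [Matrix.mulVec, dotProduct] at this
          simp only [mul_one, Pi.zero_apply] at this
          rw [← this]
          apply Finset.sum_congr rfl
          intro i _
          rw [hsym.apply p i]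
          try ring
        rw [h3, zero_mul]
      exact (mul_eq_zero.mp h1).resolve_left (hno α)
    -- contradiction: expand the constant vector 1
    have i₀ : Fin N := ⟨0, by omega⟩
    have h4 : (1:ℝ) = ∑ i' : Fin N, (if i₀ = i' then (1:ℝ) else 0) := by
      simp
    have h5 : ∑ i' : Fin N, (if i₀ = i' then (1:ℝ) else 0) = ∑ i', ∑ α, U i₀ α * U i' α := by
      apply Finset.sum_congr rfl
      intro i' _
      rw [hcomp i₀ i']
    rw [h5, Finset.sum_comm] at h4
    have h6 : ∀ α : Fin N, ∑ i', U i₀ α * U i' α = 0 := by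
      intro α
      rw [← Finset.mul_sum, hs α, mul_zero]
    rw [Finset.sum_congr rfl (fun α _ => h6 α), Finset.sum_const, smul_zero] at h4
    exact one_ne_zero h4
  obtain ⟨α₀, hα₀⟩ := hexistZ
  obtain ⟨c, hc, hcN⟩ := hconst α₀ hα₀
  have hNne : (N:ℝ) ≠ 0 := by positivity
  have hcc : c * c = (N:ℝ)⁻¹ := by
    field_simp
    linarith [hcN]
  have huniq : ∀ β, β ≠ α₀ → lam β ≠ 0 := by
    intro β hβ h0
    obtain ⟨c', hc', hcN'⟩ := hconst β h0
    have h2 := horth β α₀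
    rw [if_neg hβ] at h2
    have h3 : ∀ i : Fin N, U i β * U i α₀ = c' * c := by
      intro i
      rw [hc' i, hc i]
    rw [Finset.sum_congr rfl (fun i _ => h3 i), Finset.sum_const, Finset.card_univ,
      Fintype.card_fin, nsmul_eq_mul] at h2
    have hc'ne : c' ≠ 0 := by
      intro hz
      rw [hz] at hcN'
      simp at hcN'
    have hcne : c ≠ 0 := by
      intro hz
      rw [hz] at hcN
      simp at hcN
    have : (N:ℝ) ≠ 0 := hNne
    rcases mul_eq_zero.mp h2 with h | h
    · exact this h
    · rcases mul_eq_zero.mp h with h' | h'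
      · exact hc'ne h'
      · exact hcne h'
  -- final computation
  intro k hk
  funext p
  obtain ⟨i, j⟩ := p
  rw [hexp k i j]
  have hterm : ∀ β, β ≠ α₀ → U i β * y β k j = 0 := by
    intro β hβ
    rw [hynz β (huniq β hβ) k hk]
    simp
  rw [Finset.sum_eq_single α₀ (fun β _ hβ => hterm β hβ)
    (fun h => absurd (Finset.mem_univ _) h)]
  -- the surviving term
  have hg : y α₀ k = (Amat n τ) ^ k *ᵥ y α₀ 0 := hy0 α₀ hα₀ k
  rw [hg, hc i]
  have hy00 : y α₀ 0 = c • (fun j' => ∑ i', x 0 (i', j')) := by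
    funext j'
    rw [hy]
    simp only [Pi.smul_apply, smul_eq_mul]
    rw [Finset.mul_sum]
    apply Finset.sum_congr rfl
    intro i' _
    rw [hc i']
  rw [hy00, Matrix.mulVec_smul]
  simp only [Pi.smul_apply, smul_eq_mul]
  rw [show c * (c * ((Amat n τ ^ k *ᵥ fun j' => ∑ i', x 0 (i', j')) j))
    = (c * c) * ((Amat n τ ^ k *ᵥ fun j' => ∑ i', x 0 (i', j')) j) by ring, hcc]
  -- RHS
  rw [Matrix.smul_mulVec]
  simp only [Pi.smul_apply, smul_eq_mul]
  congr 1
  rw [Matrix.mulVec, dotProduct, Matrix.mulVec, dotProduct,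
    Fintype.sum_prod_type, Finset.sum_comm]
  apply Finset.sum_congr rfl
  intro j' _
  rw [Finset.mul_sum]
  apply Finset.sum_congr rfl
  intro i' _
  simp only [Matrix.kroneckerMap_apply, Matrix.of_apply]
  ring
end
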